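/- arXiv:1904.09798 — 4 statements merged into one kernel-verified Lean document; each statement's English description precedes it below -/
import Mathlib

section
/- Let r be a positive odd integer, r' = (r+1)/2, and let P = {p_1,…,p_{r'}}, Q = {q_0,q_1,…,q_{r'}} ⊆ [n] with q_0 < p_1 < q_1 < p_2 < ⋯ < p_{r'} < q_{r'}, and X ⊆ [n]∖(P∪Q). Let Y ⊆ [n] be different from X∪P and from X∪Q. If Y and X∪Q are not weakly r-separated, then there exists S ∈ N↓(P,Q) such that Y and X∪S are not weakly r-separated. -/
open Finset

/-- An alternating sequence for the pair of sets `A`, `B`: a strictly increasing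
sequence whose odd-position elements lie in one of `A \ B`, `B \ A` and whose
even-position elements lie in the other. -/
def IsAltSeq (A B : Finset ℕ) {m : ℕ} (f : Fin m → ℕ) : Prop :=
  StrictMono f ∧
    ((∀ j : Fin m, (j : ℕ) % 2 = 0 → f j ∈ A \ B) ∧
        (∀ j : Fin m, (j : ℕ) % 2 = 1 → f j ∈ B \ A) ∨
      (∀ j : Fin m, (j : ℕ) % 2 = 0 → f j ∈ B \ A) ∧
        (∀ j : Fin m, (j : ℕ) % 2 = 1 → f j ∈ A \ B))

/-- `altLen A B` is the maximum length of an alternating sequence for `A`, `B`. -/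
noncomputable def altLen (A B : Finset ℕ) : ℕ :=
  sSup {m : ℕ | ∃ f : Fin m → ℕ, IsAltSeq A B f}

/-- `A` surrounds `B`:  `min (A \ B) < min (B \ A)` and `max (B \ A) < max (A \ B)`. -/
def Surrounds (A B : Finset ℕ) : Prop :=
  (A \ B).min < (B \ A).min ∧ (B \ A).max < (A \ B).max

/-- Weak `r`-separation for an odd `r`. -/
def WeaklySep (r : ℕ) (A B : Finset ℕ) : Prop :=
  altLen A B ≤ r + 2 ∧
    (altLen A B = r + 2 →
      Surrounds A B ∧ A.card ≤ B.card ∨ Surrounds B A ∧ B.card ≤ A.card)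

-- ===== basic facts =====


lemma isAltSeq_card_le {A B : Finset ℕ} {m : ℕ} {f : Fin m → ℕ} (h : IsAltSeq A B f) :
    m ≤ (A ∪ B).card := by
  obtain ⟨hmono, hside⟩ := h
  have hmem : ∀ j : Fin m, f j ∈ A ∪ B := by
    intro j
    have h2 : (j : ℕ) % 2 = 0 ∨ (j : ℕ) % 2 = 1 := Nat.mod_two_eq_zero_or_one _
    rcases hside with ⟨h0, h1⟩ | ⟨h0, h1⟩ <;> rcases h2 with h2 | h2
    · exact mem_union_left _ (mem_sdiff.1 (h0 j h2)).1
    · exact mem_union_right _ (mem_sdiff.1 (h1 j h2)).1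
    · exact mem_union_right _ (mem_sdiff.1 (h0 j h2)).1
    · exact mem_union_left _ (mem_sdiff.1 (h1 j h2)).1
  calc m = (Finset.univ : Finset (Fin m)).card := by simp
  _ ≤ (A ∪ B).card := Finset.card_le_card_of_injOn f (fun a _ => hmem a)
      (fun a _ b _ hab => hmono.injective hab)

lemma altLen_bddAbove (A B : Finset ℕ) :
    BddAbove {m : ℕ | ∃ f : Fin m → ℕ, IsAltSeq A B f} := by
  refine ⟨(A ∪ B).card, ?_⟩
  rintro m ⟨f, hf⟩
  exact isAltSeq_card_le hf

lemma altLen_nonempty (A B : Finset ℕ) :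
    Set.Nonempty {m : ℕ | ∃ f : Fin m → ℕ, IsAltSeq A B f} := by
  refine ⟨0, Fin.elim0, ?_, Or.inl ⟨?_, ?_⟩⟩
  · intro a; exact a.elim0
  all_goals intro j; exact j.elim0

lemma altLen_ge {A B : Finset ℕ} {m : ℕ} {f : Fin m → ℕ} (h : IsAltSeq A B f) :
    m ≤ altLen A B :=
  le_csSup (altLen_bddAbove A B) ⟨f, h⟩

lemma altLen_spec (A B : Finset ℕ) : ∃ f : Fin (altLen A B) → ℕ, IsAltSeq A B f :=
  Nat.sSup_mem (altLen_nonempty A B) (altLen_bddAbove A B)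

lemma altLen_comm (A B : Finset ℕ) : altLen A B = altLen B A := by
  unfold altLen
  congr 1
  ext m
  constructor <;> rintro ⟨f, h1, h2⟩ <;> exact ⟨f, h1, h2.symm⟩

-- chain mono helper
lemma chain_mono {w : ℕ → ℕ} {n : ℕ} (h : ∀ m, m + 1 < n → w m < w (m + 1)) :
    ∀ a b, a < b → b < n → w a < w b := by
  intro a b hab hbn
  induction b with
  | zero => omega
  | succ b ih =>
    rcases Nat.lt_or_ge a b with h1 | h1
    · exact lt_trans (ih h1 (by omega)) (h b (by omega))
    · have : a = b := by omega
      subst this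
      exact h a (by omega)

/-- Master lemma: an interleaved pair of chains gives a lower bound on `altLen`.
`u i` sits at position `2*i` (in `A \ B`), `v i` at position `2*i+1` (in `B \ A`). -/
lemma altLen_ge_uv (A B : Finset ℕ) (L : ℕ) (u v : ℕ → ℕ)
    (hu : ∀ i, 2 * i < L → u i ∈ A \ B)
    (hv : ∀ i, 2 * i + 1 < L → v i ∈ B \ A)
    (h1 : ∀ i, 2 * i + 1 < L → u i < v i)
    (h2 : ∀ i, 2 * i + 2 < L → v i < u (i + 1)) :
    L ≤ altLen A B := by
  set g : ℕ → ℕ := fun j => if j % 2 = 0 then u (j / 2) else v (j / 2) with hg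
  have key : ∀ j, j + 1 < L → g j < g (j + 1) := by
    intro j hj
    rcases Nat.mod_two_eq_zero_or_one j with h | h
    · have h' : (j + 1) % 2 = 1 := by omega
      have hdiv : (j + 1) / 2 = j / 2 := by omega
      simp only [hg, h, h', hdiv]
      norm_num
      exact h1 (j / 2) (by omega)
    · have h' : (j + 1) % 2 = 0 := by omega
      have hdiv : (j + 1) / 2 = j / 2 + 1 := by omega
      simp only [hg, h, h', hdiv]
      norm_num
      exact h2 (j / 2) (by omega)
  have hmono : ∀ a b, a < b → b < L → g a < g b := chain_mono key
  refine altLen_ge (f := fun j : Fin L => g (j : ℕ)) ⟨?_, Or.inl ⟨?_, ?_⟩⟩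
  · intro a b hab
    exact hmono a b hab b.isLt
  · intro j hj
    show g (j : ℕ) ∈ A \ B
    have heq : g (j : ℕ) = u ((j : ℕ) / 2) := by simp [hg, hj]
    rw [heq]
    exact hu _ (by omega)
  · intro j hj
    show g (j : ℕ) ∈ B \ A
    have heq : g (j : ℕ) = v ((j : ℕ) / 2) := by simp [hg, hj]
    rw [heq]
    have h2j : 2 * ((j : ℕ) / 2) + 1 = (j : ℕ) := by omega
    exact hv _ (by omega)

-- min/max helpers
lemma lt_min_of {s : Finset ℕ} {a : ℕ} (h : ∀ b ∈ s, a < b) : (a : WithTop ℕ) < s.min := by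
  rcases s.eq_empty_or_nonempty with rfl | hs
  · simp only [Finset.min_empty]
    exact WithTop.coe_lt_top a
  · obtain ⟨m, hm⟩ := Finset.min_of_nonempty hs
    rw [hm]
    exact WithTop.coe_lt_coe.mpr (h m (Finset.mem_of_min hm))

lemma max_lt_of {s : Finset ℕ} {a : ℕ} (h : ∀ b ∈ s, b < a) : s.max < (a : WithBot ℕ) := by
  rcases s.eq_empty_or_nonempty with rfl | hs
  · simp only [Finset.max_empty]
    exact WithBot.bot_lt_coe a
  · obtain ⟨m, hm⟩ := Finset.max_of_nonempty hs
    rw [hm]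
    exact WithBot.coe_lt_coe.mpr (h m (Finset.mem_of_max hm))

lemma card_key (Y B : Finset ℕ) : Y.card + (B \ Y).card = B.card + (Y \ B).card := by
  have h1 : (Y ∩ B).card + (Y \ B).card = Y.card := Finset.card_inter_add_card_sdiff Y B
  have h2 : (B ∩ Y).card + (B \ Y).card = B.card := Finset.card_inter_add_card_sdiff B Y
  have h3 : (Y ∩ B).card = (B ∩ Y).card := by rw [Finset.inter_comm]
  omega

lemma find_slot {w : ℕ → ℕ} {n : ℕ} (hmono : ∀ m, m + 1 < n → w m < w (m + 1))
    (x : ℕ) (hx : ∀ m < n, w m ≠ x) :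
    ∃ k ≤ n, (∀ m < n, m < k → w m < x) ∧ (∀ m < n, k ≤ m → x < w m) := by
  by_cases h : ∃ m, m < n ∧ x < w m
  · classical
    set k := Nat.find h with hk
    obtain ⟨hkn, hkx⟩ := Nat.find_spec h
    refine ⟨k, by omega, ?_, ?_⟩
    · intro m hm hmk
      have hns := Nat.find_min h (m := m) hmk
      have := hx m hm
      omega
    · intro m hm hkm
      rcases Nat.eq_or_lt_of_le hkm with rfl | hlt
      · exact hkx
      · exact lt_trans hkx (chain_mono hmono k m hlt hm)
  · push_neg at h
    refine ⟨n, le_refl n, fun m hm _ => ?_, fun m hm hnm => by omega⟩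
    have := h m hm
    have := hx m hm
    omega


lemma notWS_of_long {r t : ℕ} (hrt : r + 2 = 2 * t + 1) {Y B' : Finset ℕ}
    (h : 2 * t + 2 ≤ altLen Y B') : ¬ WeaklySep r Y B' := by
  rintro ⟨hw1, _⟩
  omega

/-- A `D`-ended alternating sequence of length `2t+1` plus a cardinality gap
implies failure of weak separation. -/
lemma notWS_D {r t : ℕ} (hrt : r + 2 = 2 * t + 1) {Y B' : Finset ℕ} {u v : ℕ → ℕ}
    (hu : ∀ i, i ≤ t → u i ∈ Y \ B') (hv : ∀ i, i < t → v i ∈ B' \ Y)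
    (h1 : ∀ i, i < t → u i < v i) (h2 : ∀ i, i < t → v i < u (i + 1))
    (hcard : B'.card < Y.card) : ¬ WeaklySep r Y B' := by
  rintro ⟨hw1, hw2⟩
  have hge : 2 * t + 1 ≤ altLen Y B' :=
    altLen_ge_uv Y B' (2 * t + 1) u v (fun i hi => hu i (by omega))
      (fun i hi => hv i (by omega)) (fun i hi => h1 i (by omega))
      (fun i hi => h2 i (by omega))
  have heq : altLen Y B' = r + 2 := by omega
  have hlo : ∀ e ∈ B' \ Y, u 0 < e := by
    intro e he
    have hne : e ≠ u 0 := by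
      intro h
      have h0 := hu 0 (by omega)
      rw [h] at he
      simp only [mem_sdiff] at he h0
      exact he.2 h0.1
    by_contra hlt
    have helt : e < u 0 := by omega
    have hcontra : 2 * t + 2 ≤ altLen B' Y := by
      refine altLen_ge_uv B' Y (2 * t + 2) (fun i => if i = 0 then e else v (i - 1)) u
        ?_ ?_ ?_ ?_
      · intro i hi
        by_cases h0 : i = 0
        · simpa [h0] using he
        · simpa [h0] using hv (i - 1) (by omega)
      · intro i hi
        exact hu i (by omega)
      · intro i hi
        by_cases h0 : i = 0
        · simpa [h0] using helt
        · simp only [h0, if_false]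
          calc v (i - 1) < u (i - 1 + 1) := h2 (i - 1) (by omega)
          _ = u i := by congr 1; omega
      · intro i hi
        simp only [Nat.add_sub_cancel, Nat.succ_ne_zero, if_false]
        exact h1 i (by omega)
    rw [altLen_comm Y B'] at heq
    omega
  have hhi : ∀ e ∈ B' \ Y, e < u t := by
    intro e he
    have hne : e ≠ u t := by
      intro h
      have h0 := hu t (by omega)
      rw [h] at he
      simp only [mem_sdiff] at he h0
      exact he.2 h0.1
    by_contra hlt
    have helt : u t < e := by omega
    have hcontra : 2 * t + 2 ≤ altLen Y B' := by
      refine altLen_ge_uv Y B' (2 * t + 2) u (fun i => if i = t then e else v i)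
        ?_ ?_ ?_ ?_
      · intro i hi
        exact hu i (by omega)
      · intro i hi
        by_cases h0 : i = t
        · simpa [h0] using he
        · simpa [h0] using hv i (by omega)
      · intro i hi
        by_cases h0 : i = t
        · simpa [h0] using helt
        · simpa [h0] using h1 i (by omega)
      · intro i hi
        have h0 : i ≠ t := by omega
        simp only [h0, if_false]
        exact h2 i (by omega)
    omega
  have hsurr : Surrounds Y B' := by
    constructor
    · calc (Y \ B').min ≤ ((u 0 : ℕ) : WithTop ℕ) := Finset.min_le (hu 0 (by omega))
      _ < (B' \ Y).min := lt_min_of hlo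
    · calc (B' \ Y).max < ((u t : ℕ) : WithBot ℕ) := max_lt_of hhi
      _ ≤ (Y \ B').max := Finset.le_max (hu t (by omega))
  rcases hw2 heq with ⟨_, hc⟩ | ⟨hs, _⟩
  · omega
  · exact absurd hsurr.1 (lt_asymm hs.1)

/-- An `E`-ended alternating sequence of length `2t+1` plus a cardinality gap
implies failure of weak separation. -/
lemma notWS_E {r t : ℕ} (hrt : r + 2 = 2 * t + 1) {Y B' : Finset ℕ} {u v : ℕ → ℕ}
    (hu : ∀ i, i ≤ t → u i ∈ B' \ Y) (hv : ∀ i, i < t → v i ∈ Y \ B')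
    (h1 : ∀ i, i < t → u i < v i) (h2 : ∀ i, i < t → v i < u (i + 1))
    (hcard : Y.card < B'.card) : ¬ WeaklySep r Y B' := by
  rintro ⟨hw1, hw2⟩
  have hge : 2 * t + 1 ≤ altLen B' Y :=
    altLen_ge_uv B' Y (2 * t + 1) u v (fun i hi => hu i (by omega))
      (fun i hi => hv i (by omega)) (fun i hi => h1 i (by omega))
      (fun i hi => h2 i (by omega))
  rw [← altLen_comm Y B'] at hge
  have heq : altLen Y B' = r + 2 := by omega
  have hlo : ∀ e ∈ Y \ B', u 0 < e := by
    intro e he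
    have hne : e ≠ u 0 := by
      intro h
      have h0 := hu 0 (by omega)
      rw [h] at he
      simp only [mem_sdiff] at he h0
      exact he.2 h0.1
    by_contra hlt
    have helt : e < u 0 := by omega
    have hcontra : 2 * t + 2 ≤ altLen Y B' := by
      refine altLen_ge_uv Y B' (2 * t + 2) (fun i => if i = 0 then e else v (i - 1)) u
        ?_ ?_ ?_ ?_
      · intro i hi
        by_cases h0 : i = 0
        · simpa [h0] using he
        · simpa [h0] using hv (i - 1) (by omega)
      · intro i hi
        exact hu i (by omega)
      · intro i hi
        by_cases h0 : i = 0
        · simpa [h0] using helt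
        · simp only [h0, if_false]
          calc v (i - 1) < u (i - 1 + 1) := h2 (i - 1) (by omega)
          _ = u i := by congr 1; omega
      · intro i hi
        simp only [Nat.add_sub_cancel, Nat.succ_ne_zero, if_false]
        exact h1 i (by omega)
    omega
  have hhi : ∀ e ∈ Y \ B', e < u t := by
    intro e he
    have hne : e ≠ u t := by
      intro h
      have h0 := hu t (by omega)
      rw [h] at he
      simp only [mem_sdiff] at he h0
      exact he.2 h0.1
    by_contra hlt
    have helt : u t < e := by omega
    have hcontra : 2 * t + 2 ≤ altLen B' Y := by
      refine altLen_ge_uv B' Y (2 * t + 2) u (fun i => if i = t then e else v i)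
        ?_ ?_ ?_ ?_
      · intro i hi
        exact hu i (by omega)
      · intro i hi
        by_cases h0 : i = t
        · simpa [h0] using he
        · simpa [h0] using hv i (by omega)
      · intro i hi
        by_cases h0 : i = t
        · simpa [h0] using helt
        · simpa [h0] using h1 i (by omega)
      · intro i hi
        have h0 : i ≠ t := by omega
        simp only [h0, if_false]
        exact h2 i (by omega)
    rw [← altLen_comm Y B'] at hcontra
    omega
  have hsurr : Surrounds B' Y := by
    constructor
    · calc (B' \ Y).min ≤ ((u 0 : ℕ) : WithTop ℕ) := Finset.min_le (hu 0 (by omega))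
      _ < (Y \ B').min := lt_min_of hlo
    · calc (Y \ B').max < ((u t : ℕ) : WithBot ℕ) := max_lt_of hhi
      _ ≤ (B' \ Y).max := Finset.le_max (hu t (by omega))
  rcases hw2 heq with ⟨hs, _⟩ | ⟨_, hc⟩
  · exact absurd hsurr.1 (lt_asymm hs.1)
  · omega

lemma exists_unused (e : ℕ → ℕ) (n : ℕ)
    (hinj : ∀ i < n, ∀ j < n, e i = e j → i = j)
    (I : Finset ℕ) (w : ℕ → ℕ) (hI : I.card < n) :
    ∃ i < n, ∀ m ∈ I, w m ≠ e i := by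
  by_contra hcon
  push_neg at hcon
  have hsub : (Finset.range n).image e ⊆ I.image w := by
    intro x hx
    simp only [Finset.mem_image, Finset.mem_range] at hx ⊢
    obtain ⟨i, hi, rfl⟩ := hx
    obtain ⟨m, hm, hme⟩ := hcon i hi
    exact ⟨m, hm, hme⟩
  have h1 : ((Finset.range n).image e).card = n := by
    rw [Finset.card_image_of_injOn, Finset.card_range]
    intro i hi j hj hij
    simp only [Finset.coe_range, Set.mem_Iio] at hi hj
    exact hinj i hi j hj hij
  have h2 : (I.image w).card ≤ I.card := Finset.card_image_le
  have := Finset.card_le_card hsub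
  omega

lemma strictMono_eq {n : ℕ} {a b : ℕ → ℕ}
    (ha : ∀ m, m + 1 < n → a m < a (m + 1)) (hb : ∀ m, m + 1 < n → b m < b (m + 1))
    (hab : ∀ i < n, ∃ j < n, a i = b j) (hba : ∀ j < n, ∃ i < n, b j = a i) :
    ∀ i < n, a i = b i := by
  intro i
  induction i using Nat.strong_induction_on with
  | _ i IH =>
    intro hin
    obtain ⟨j, hjn, hij⟩ := hab i hin
    rcases Nat.lt_trichotomy j i with hj | rfl | hj
    · exfalso
      have hji : a j = b j := IH j hj (by omega)
      have : a j < a i := chain_mono ha j i hj hin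
      omega
    · exact hij
    · exfalso
      have hbi : b i < b j := chain_mono hb i j hj hjn
      obtain ⟨i', hi'n, hbi'⟩ := hba i hin
      have hi'i : i' < i := by
        by_contra hge
        have : a i ≤ a i' := by
          rcases Nat.eq_or_lt_of_le (Nat.le_of_not_lt hge) with heq | hlt
          · rw [heq]
          · exact le_of_lt (chain_mono ha i i' hlt hi'n)
        omega
      have : a i' = b i' := IH i' hi'i (by omega)
      have hbb : b i = b i' := by omega
      have : b i' < b i := chain_mono hb i' i hi'i hin
      omega

/-- If every value `b j` (`j < n`) occurs among the `a i` (`i < n`), and both are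
increasing chains, then they agree. -/
lemma all_used {n : ℕ} {a b : ℕ → ℕ}
    (ha : ∀ m, m + 1 < n → a m < a (m + 1)) (hb : ∀ m, m + 1 < n → b m < b (m + 1))
    (hba : ∀ j < n, ∃ i < n, b j = a i) :
    ∀ i < n, a i = b i := by
  classical
  have hchoice : ∀ j : Fin n, ∃ i : Fin n, b (j : ℕ) = a (i : ℕ) := by
    intro j
    obtain ⟨i, hi, h⟩ := hba j j.isLt
    exact ⟨⟨i, hi⟩, h⟩
  choose g hg using hchoice
  have hginj : Function.Injective g := by
    intro j j' hjj'
    have : b (j : ℕ) = b (j' : ℕ) := by rw [hg j, hg j', hjj']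
    by_contra hne
    have hne' : (j : ℕ) ≠ (j' : ℕ) := fun h => hne (Fin.ext h)
    rcases Nat.lt_or_ge (j : ℕ) (j' : ℕ) with h | h
    · have := chain_mono hb _ _ h j'.isLt; omega
    · have hlt : (j' : ℕ) < (j : ℕ) := by omega
      have := chain_mono hb _ _ hlt j.isLt; omega
  have hgsurj : Function.Surjective g := Finite.surjective_of_injective hginj
  have hab : ∀ i < n, ∃ j < n, a i = b j := by
    intro i hin
    obtain ⟨j, hj⟩ := hgsurj ⟨i, hin⟩
    refine ⟨j, j.isLt, ?_⟩
    have := hg j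
    rw [hj] at this
    exact this.symm
  exact strictMono_eq ha hb hab hba



lemma main_aux (r t : ℕ) (hrt : r + 2 = 2 * t + 1) (ht1 : 1 ≤ t)
    (qv pv : ℕ → ℕ) (P Q X Y : Finset ℕ)
    (hqp1 : ∀ i, i < t → qv i < pv i) (hqp2 : ∀ i, i < t → pv i < qv (i + 1))
    (hqvQ : ∀ j, j < t + 1 → qv j ∈ Q) (hpvP : ∀ i, i < t → pv i ∈ P)
    (hQimg : ∀ x ∈ Q, ∃ j, j < t + 1 ∧ x = qv j)
    (hPimg : ∀ x ∈ P, ∃ i, i < t ∧ x = pv i)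
    (hXPQ : ∀ x ∈ X, x ∉ P ∧ x ∉ Q)
    (hYP : Y ≠ X ∪ P) (hYQ : Y ≠ X ∪ Q)
    (hbad : ¬ WeaklySep r Y (X ∪ Q)) :
    ∃ S : Finset ℕ,
      ((∃ b ∈ Q, S = Q.erase b) ∨ ∃ a ∈ P, ∃ b ∈ Q, S = insert a (Q.erase b)) ∧
      ¬ WeaklySep r Y (X ∪ S) := by
  classical
  have hqmono : ∀ m, m + 1 < t + 1 → qv m < qv (m + 1) := fun m hm =>
    lt_trans (hqp1 m (by omega)) (hqp2 m (by omega))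
  have hqchain : ∀ a b, a < b → b < t + 1 → qv a < qv b := chain_mono hqmono
  have hqchain' : ∀ a b, a ≤ b → b < t + 1 → qv a ≤ qv b := by
    intro a b hab hb
    rcases Nat.eq_or_lt_of_le hab with rfl | h
    · exact le_refl _
    · exact le_of_lt (hqchain a b h hb)
  have hqv_inj : ∀ i, i < t + 1 → ∀ j, j < t + 1 → qv i = qv j → i = j := by
    intro i hi j hj heq
    rcases Nat.lt_trichotomy i j with h | h | h
    · have := hqchain i j h hj; omega
    · exact h
    · have := hqchain j i h hi; omega
  have hpv_ne_qv : ∀ i, i < t → ∀ j, j < t + 1 → pv i ≠ qv j := by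
    intro i hi j hj heq
    rcases le_or_gt j i with h | h
    · have h1 : qv j ≤ qv i := hqchain' j i h (by omega)
      have := hqp1 i hi
      omega
    · have h1 : qv (i + 1) ≤ qv j := hqchain' (i + 1) j h hj
      have := hqp2 i hi
      omega
  have hpmono : ∀ m, m + 1 < t → pv m < pv (m + 1) := by
    intro m hm
    calc pv m < qv (m + 1) := hqp2 m (by omega)
    _ < pv (m + 1) := hqp1 (m + 1) (by omega)
  have hpchain : ∀ a b, a < b → b < t → pv a < pv b := chain_mono hpmono
  have hpv_inj : ∀ i, i < t → ∀ j, j < t → pv i = pv j → i = j := by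
    intro i hi j hj heq
    rcases Nat.lt_trichotomy i j with h | h | h
    · have := hpchain i j h hj; omega
    · exact h
    · have := hpchain j i h hi; omega
  have hqvX : ∀ j, j < t + 1 → qv j ∉ X := fun j hj hmem => (hXPQ _ hmem).2 (hqvQ j hj)
  have hpvX : ∀ i, i < t → pv i ∉ X := fun i hi hmem => (hXPQ _ hmem).1 (hpvP i hi)
  have hpvQ : ∀ i, i < t → pv i ∉ Q := by
    intro i hi hmem
    obtain ⟨j, hj, heq⟩ := hQimg _ hmem
    exact hpv_ne_qv i hi j hj heq
  have hQeq : Q = (Finset.range (t + 1)).image qv := by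
    ext x
    simp only [Finset.mem_image, Finset.mem_range]
    constructor
    · intro hx
      obtain ⟨j, hj, rfl⟩ := hQimg x hx
      exact ⟨j, hj, rfl⟩
    · rintro ⟨j, hj, rfl⟩
      exact hqvQ j hj
  have hQcard : Q.card = t + 1 := by
    rw [hQeq, Finset.card_image_of_injOn, Finset.card_range]
    intro a ha b hb hab
    simp only [Finset.coe_range, Set.mem_Iio] at ha hb
    exact hqv_inj a ha b hb hab
  have hdisjXQ : Disjoint X Q := Finset.disjoint_left.mpr (fun {x} hx => ((hXPQ x hx).2))
  have hBcard : (X ∪ Q).card = X.card + (t + 1) := by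
    rw [Finset.card_union_of_disjoint hdisjXQ, hQcard]
  have hSerase_card : ∀ j, j < t + 1 → (X ∪ Q.erase (qv j)).card = X.card + t := by
    intro j hj
    have hd : Disjoint X (Q.erase (qv j)) :=
      Finset.disjoint_left.mpr (fun x hx hmem => (hXPQ x hx).2 (mem_of_mem_erase hmem))
    rw [Finset.card_union_of_disjoint hd, Finset.card_erase_of_mem (hqvQ j hj), hQcard]
    omega
  have hSswap_card : ∀ i, i < t → ∀ j, j < t + 1 →
      (X ∪ insert (pv i) (Q.erase (qv j))).card = X.card + (t + 1) := by
    intro i hi j hj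
    have hni : pv i ∉ Q.erase (qv j) := fun hmem => hpvQ i hi (mem_of_mem_erase hmem)
    have hd : Disjoint X (insert (pv i) (Q.erase (qv j))) := by
      refine Finset.disjoint_left.mpr (fun x hx hmem => ?_)
      rcases Finset.mem_insert.1 hmem with heq | hmem2
      · exact hpvX i hi (heq ▸ hx)
      · exact (hXPQ _ hx).2 (mem_of_mem_erase hmem2)
    rw [Finset.card_union_of_disjoint hd, Finset.card_insert_of_notMem hni,
      Finset.card_erase_of_mem (hqvQ j hj), hQcard]
    omega
  have hD_er : ∀ (j : ℕ), ∀ x ∈ Y \ (X ∪ Q), x ∈ Y \ (X ∪ Q.erase (qv j)) := by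
    intro j x hx
    simp only [mem_sdiff, mem_union] at hx ⊢
    push_neg at hx ⊢
    exact ⟨hx.1, hx.2.1, fun h => hx.2.2 (mem_of_mem_erase h)⟩
  have hE_er : ∀ (j : ℕ), ∀ x ∈ (X ∪ Q) \ Y, x ≠ qv j → x ∈ (X ∪ Q.erase (qv j)) \ Y := by
    intro j x hx hne
    simp only [mem_sdiff, mem_union] at hx ⊢
    refine ⟨?_, hx.2⟩
    rcases hx.1 with h | h
    · exact Or.inl h
    · exact Or.inr (Finset.mem_erase.mpr ⟨hne, h⟩)
  have hD_er_q : ∀ j, j < t + 1 → qv j ∈ Y → qv j ∈ Y \ (X ∪ Q.erase (qv j)) := by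
    intro j hj hY
    simp only [mem_sdiff, mem_union]
    push_neg
    exact ⟨hY, hqvX j hj, Finset.notMem_erase _ _⟩
  have hE_sw : ∀ (i j : ℕ), ∀ x ∈ (X ∪ Q) \ Y, x ≠ qv j →
      x ∈ (X ∪ insert (pv i) (Q.erase (qv j))) \ Y := by
    intro i j x hx hne
    have h2 := hE_er j x hx hne
    simp only [mem_sdiff, mem_union] at h2 ⊢
    refine ⟨?_, h2.2⟩
    rcases h2.1 with h | h
    · exact Or.inl h
    · exact Or.inr (Finset.mem_insert_of_mem h)
  have hE_sw_p : ∀ i, i < t → ∀ (j : ℕ), pv i ∉ Y →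
      pv i ∈ (X ∪ insert (pv i) (Q.erase (qv j))) \ Y := by
    intro i hi j hnY
    simp only [mem_sdiff, mem_union]
    exact ⟨Or.inr (Finset.mem_insert_self _ _), hnY⟩
  have hD_sw : ∀ i, i < t → ∀ (j : ℕ), ∀ x ∈ Y \ (X ∪ Q), x ≠ pv i →
      x ∈ Y \ (X ∪ insert (pv i) (Q.erase (qv j))) := by
    intro i hi j x hx hne
    simp only [mem_sdiff, mem_union] at hx ⊢
    push_neg at hx ⊢
    refine ⟨hx.1, hx.2.1, fun h => ?_⟩
    rcases Finset.mem_insert.1 h with heq | h2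
    · exact hne heq
    · exact hx.2.2 (mem_of_mem_erase h2)
  have hD_sw_q : ∀ i, i < t → ∀ j, j < t + 1 → qv j ∈ Y →
      qv j ∈ Y \ (X ∪ insert (pv i) (Q.erase (qv j))) := by
    intro i hi j hj hY
    simp only [mem_sdiff, mem_union]
    push_neg
    refine ⟨hY, hqvX j hj, fun h => ?_⟩
    rcases Finset.mem_insert.1 h with heq | h2
    · exact hpv_ne_qv i hi j hj heq.symm
    · exact Finset.notMem_erase _ _ h2
  have hD_er_p : ∀ i, i < t → pv i ∈ Y → ∀ j : ℕ, pv i ∈ Y \ (X ∪ Q.erase (qv j)) := by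
    intro i hi hY j
    simp only [mem_sdiff, mem_union]
    push_neg
    exact ⟨hY, hpvX i hi, fun h => hpvQ i hi (mem_of_mem_erase h)⟩
  have hD_sw_p : ∀ i, i < t → pv i ∈ Y → ∀ i2, i2 < t → i ≠ i2 → ∀ j : ℕ,
      pv i ∈ Y \ (X ∪ insert (pv i2) (Q.erase (qv j))) := by
    intro i hi hY i2 hi2 hne j
    simp only [mem_sdiff, mem_union]
    push_neg
    refine ⟨hY, hpvX i hi, fun h => ?_⟩
    rcases Finset.mem_insert.1 h with heq | h2
    · exact hne (hpv_inj i hi i2 hi2 heq)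
    · exact hpvQ i hi (mem_of_mem_erase h2)
  have hstep1 : 2 * t + 1 ≤ altLen Y (X ∪ Q) := by
    by_contra hcon
    exact hbad ⟨by omega, fun heq => absurd heq (by omega)⟩
  by_cases hlong : 2 * t + 2 ≤ altLen Y (X ∪ Q)
  · -- CASE I
    obtain ⟨f, hfmono, hfside⟩ := altLen_spec Y (X ∪ Q)
    set u : ℕ → ℕ := fun i => if h : 2 * i < altLen Y (X ∪ Q) then f ⟨2 * i, h⟩ else 0 with hudef
    set v : ℕ → ℕ := fun i => if h : 2 * i + 1 < altLen Y (X ∪ Q) then f ⟨2 * i + 1, h⟩ else 0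
      with hvdef
    have huv : ∀ i, i ≤ t → u i < v i := by
      intro i hi
      simp only [hudef, hvdef]
      rw [dif_pos (by omega : 2 * i < altLen Y (X ∪ Q)),
        dif_pos (by omega : 2 * i + 1 < altLen Y (X ∪ Q))]
      exact hfmono (Fin.mk_lt_mk.mpr (by omega))
    have hvu : ∀ i, i < t → v i < u (i + 1) := by
      intro i hi
      simp only [hudef, hvdef]
      rw [dif_pos (by omega : 2 * i + 1 < altLen Y (X ∪ Q)),
        dif_pos (by omega : 2 * (i + 1) < altLen Y (X ∪ Q))]
      exact hfmono (Fin.mk_lt_mk.mpr (by omega))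
    have humono : ∀ m, m + 1 < t + 1 → u m < u (m + 1) := fun m hm =>
      lt_trans (huv m (by omega)) (hvu m (by omega))
    have hvmono : ∀ m, m + 1 < t + 1 → v m < v (m + 1) := fun m hm =>
      lt_trans (hvu m (by omega)) (huv (m + 1) (by omega))
    rcases hfside with ⟨hev, hod⟩ | ⟨hev, hod⟩
    · -- CASE I-D : even positions in Y \ (X ∪ Q)
      have hu_mem : ∀ i, i ≤ t → u i ∈ Y \ (X ∪ Q) := by
        intro i hi
        simp only [hudef]
        rw [dif_pos (by omega : 2 * i < altLen Y (X ∪ Q))]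
        exact hev _ (by omega : 2 * i % 2 = 0)
      have hv_mem : ∀ i, i ≤ t → v i ∈ (X ∪ Q) \ Y := by
        intro i hi
        simp only [hvdef]
        rw [dif_pos (by omega : 2 * i + 1 < altLen Y (X ∪ Q))]
        exact hod _ (by omega : (2 * i + 1) % 2 = 1)
      have huY : ∀ i, i ≤ t → u i ∈ Y := fun i hi => (mem_sdiff.1 (hu_mem i hi)).1
      have hvY : ∀ i, i ≤ t → v i ∉ Y := fun i hi => (mem_sdiff.1 (hv_mem i hi)).2
      by_cases hused : ∃ j, j < t + 1 ∧ ∀ i, i ≤ t → v i ≠ qv j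
      · obtain ⟨j, hj, hjun⟩ := hused
        refine ⟨Q.erase (qv j), Or.inl ⟨qv j, hqvQ j hj, rfl⟩, ?_⟩
        refine notWS_of_long hrt ?_
        refine altLen_ge_uv Y (X ∪ Q.erase (qv j)) (2 * t + 2) u v ?_ ?_ ?_ ?_
        · intro i hi; exact hD_er j _ (hu_mem i (by omega))
        · intro i hi; exact hE_er j _ (hv_mem i (by omega)) (hjun i (by omega))
        · intro i hi; exact huv i (by omega)
        · intro i hi; exact hvu i (by omega)
      · push_neg at hused
        have hveq : ∀ i, i < t + 1 → v i = qv i := by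
          refine all_used (n := t + 1) (fun m hm => hvmono m hm) hqmono ?_
          intro j hj
          obtain ⟨i, hi, he⟩ := hused j hj
          exact ⟨i, by omega, he.symm⟩
        have hqvY : ∀ i, i < t + 1 → qv i ∉ Y := by
          intro i hi
          rw [← hveq i hi]
          exact hvY i (by omega)
        by_cases hcard : (X ∪ Q).card ≤ Y.card
        · have hcard2 : X.card + (t + 1) ≤ Y.card := by rw [← hBcard]; exact hcard
          by_cases hPY : ∀ i, i < t → pv i ∈ Y
          · -- trick-D : S = Q.erase (qv t)
            refine ⟨Q.erase (qv t), Or.inl ⟨qv t, hqvQ t (by omega), rfl⟩, ?_⟩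
            set u2 : ℕ → ℕ := fun i => if i = 0 then u 0 else pv (i - 1) with hu2def
            refine notWS_D hrt (u := u2) (v := qv) ?_ ?_ ?_ ?_ ?_
            · intro i hi
              simp only [hu2def]
              by_cases h0 : i = 0
              · rw [if_pos h0]; exact hD_er t _ (hu_mem 0 (by omega))
              · rw [if_neg h0]; exact hD_er_p (i - 1) (by omega) (hPY (i - 1) (by omega)) t
            · intro i hi
              refine hE_er t _ ?_ ?_
              · rw [← hveq i (by omega)]; exact hv_mem i (by omega)
              · intro h; have := hqv_inj i (by omega) t (by omega) h; omega
            · intro i hi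
              simp only [hu2def]
              by_cases h0 : i = 0
              · rw [if_pos h0, h0]
                have h1 := huv 0 (by omega)
                have h2 := hveq 0 (by omega)
                omega
              · rw [if_neg h0]
                have h1 := hqp2 (i - 1) (by omega)
                have h2 : i - 1 + 1 = i := by omega
                rw [h2] at h1
                exact h1
            · intro i hi
              simp only [hu2def]
              rw [if_neg (by omega : ¬ i + 1 = 0)]
              have h2 : i + 1 - 1 = i := by omega
              rw [h2]
              exact hqp1 i hi
            · rw [hSerase_card t (by omega)]; omega
          · push_neg at hPY
            obtain ⟨i0, hi0, hpnY⟩ := hPY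
            have hune : ∀ i, i ≤ t → u i ≠ pv i0 := by
              intro i hi h
              exact hpnY (h ▸ huY i hi)
            by_cases hcmp : pv i0 < u (i0 + 1)
            · refine ⟨insert (pv i0) (Q.erase (qv i0)),
                Or.inr ⟨pv i0, hpvP i0 hi0, qv i0, hqvQ i0 (by omega), rfl⟩, ?_⟩
              refine notWS_of_long hrt ?_
              set v2 : ℕ → ℕ := fun m => if m = i0 then pv i0 else v m with hv2def
              refine altLen_ge_uv Y _ (2 * t + 2) u v2 ?_ ?_ ?_ ?_
              · intro i hi
                exact hD_sw i0 hi0 i0 _ (hu_mem i (by omega)) (hune i (by omega))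
              · intro i hi
                simp only [hv2def]
                by_cases h0 : i = i0
                · rw [if_pos h0]; exact hE_sw_p i0 hi0 i0 hpnY
                · rw [if_neg h0]
                  refine hE_sw i0 i0 _ (hv_mem i (by omega)) ?_
                  rw [hveq i (by omega)]
                  intro h; exact h0 (hqv_inj i (by omega) i0 (by omega) h)
              · intro i hi
                simp only [hv2def]
                by_cases h0 : i = i0
                · rw [if_pos h0, h0]
                  have h1 := huv i0 (by omega)
                  have h2 := hveq i0 (by omega)
                  have h3 := hqp1 i0 hi0
                  omega
                · rw [if_neg h0]; exact huv i (by omega)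
              · intro i hi
                simp only [hv2def]
                by_cases h0 : i = i0
                · rw [if_pos h0, h0]; exact hcmp
                · rw [if_neg h0]; exact hvu i (by omega)
            · have hcmp' : u (i0 + 1) < pv i0 := by
                have := hune (i0 + 1) (by omega)
                omega
              refine ⟨insert (pv i0) (Q.erase (qv (i0 + 1))),
                Or.inr ⟨pv i0, hpvP i0 hi0, qv (i0 + 1), hqvQ (i0 + 1) (by omega), rfl⟩, ?_⟩
              refine notWS_of_long hrt ?_
              set v2 : ℕ → ℕ := fun m => if m = i0 + 1 then pv i0 else v m with hv2def
              refine altLen_ge_uv Y _ (2 * t + 2) u v2 ?_ ?_ ?_ ?_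
              · intro i hi
                exact hD_sw i0 hi0 (i0 + 1) _ (hu_mem i (by omega)) (hune i (by omega))
              · intro i hi
                simp only [hv2def]
                by_cases h0 : i = i0 + 1
                · rw [if_pos h0]; exact hE_sw_p i0 hi0 (i0 + 1) hpnY
                · rw [if_neg h0]
                  refine hE_sw i0 (i0 + 1) _ (hv_mem i (by omega)) ?_
                  rw [hveq i (by omega)]
                  intro h; exact h0 (hqv_inj i (by omega) (i0 + 1) (by omega) h)
              · intro i hi
                simp only [hv2def]
                by_cases h0 : i = i0 + 1
                · rw [if_pos h0, h0]; exact hcmp'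
                · rw [if_neg h0]; exact huv i (by omega)
              · intro i hi
                simp only [hv2def]
                by_cases h0 : i = i0 + 1
                · rw [if_pos h0, h0]
                  have h1 := hqp2 i0 hi0
                  have h2 := hveq (i0 + 1) (by omega)
                  have h3 := hvu (i0 + 1) (by omega)
                  omega
                · rw [if_neg h0]; exact hvu i (by omega)
        · -- Y.card < B.card : an extra E element ξ outside Q exists
          have hYlt : Y.card < X.card + (t + 1) := by rw [← hBcard]; omega
          have hDcard : t + 1 ≤ (Y \ (X ∪ Q)).card := by
            have hsub : (Finset.range (t + 1)).image u ⊆ Y \ (X ∪ Q) := by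
              intro x hx
              simp only [Finset.mem_image, Finset.mem_range] at hx
              obtain ⟨i, hi, rfl⟩ := hx
              exact hu_mem i (by omega)
            have hc : ((Finset.range (t + 1)).image u).card = t + 1 := by
              rw [Finset.card_image_of_injOn, Finset.card_range]
              intro a ha b hb hab
              simp only [Finset.coe_range, Set.mem_Iio] at ha hb
              by_contra hne
              rcases Nat.lt_or_ge a b with h | h
              · have := chain_mono humono a b h hb; omega
              · have hlt : b < a := by omega
                have := chain_mono humono b a hlt ha; omega
            calc t + 1 = ((Finset.range (t + 1)).image u).card := hc.symm
            _ ≤ (Y \ (X ∪ Q)).card := Finset.card_le_card hsub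
          have hkey := card_key Y (X ∪ Q)
          have hEcard : t + 2 ≤ ((X ∪ Q) \ Y).card := by omega
          have hξex : ∃ ξ, ξ ∈ (X ∪ Q) \ Y ∧ ξ ∉ Q := by
            by_contra hcon
            push_neg at hcon
            have hsub : (X ∪ Q) \ Y ⊆ Q := fun x hx => hcon x hx
            have := Finset.card_le_card hsub
            omega
          obtain ⟨ξ, hξE, hξQ⟩ := hξex
          have hξY : ξ ∉ Y := (mem_sdiff.1 hξE).2
          have hξne : ∀ m, m < t + 1 → u m ≠ ξ := fun m hm h => hξY (h ▸ huY m (by omega))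
          obtain ⟨k, hk, hklo, hkhi⟩ := find_slot humono ξ hξne
          by_cases hk0 : k = 0
          · -- ξ below u 0 : E-start sequence, S = Q.erase (qv t)
            refine ⟨Q.erase (qv t), Or.inl ⟨qv t, hqvQ t (by omega), rfl⟩, ?_⟩
            refine notWS_of_long hrt ?_
            rw [altLen_comm]
            set u2 : ℕ → ℕ := fun i => if i = 0 then ξ else qv (i - 1) with hu2def
            refine altLen_ge_uv (X ∪ Q.erase (qv t)) Y (2 * t + 2) u2 u ?_ ?_ ?_ ?_
            · intro i hi
              simp only [hu2def]
              by_cases h0 : i = 0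
              · rw [if_pos h0]; exact hE_er t _ hξE (fun h => hξQ (h ▸ hqvQ t (by omega)))
              · rw [if_neg h0]
                refine hE_er t _ ?_ ?_
                · rw [← hveq (i - 1) (by omega)]; exact hv_mem (i - 1) (by omega)
                · intro h; have := hqv_inj (i - 1) (by omega) t (by omega) h; omega
            · intro i hi; exact hD_er t _ (hu_mem i (by omega))
            · intro i hi
              simp only [hu2def]
              by_cases h0 : i = 0
              · rw [if_pos h0, h0]
                exact hkhi 0 (by omega) (by omega)
              · rw [if_neg h0]
                have h1 := hvu (i - 1) (by omega)
                have h2 := hveq (i - 1) (by omega)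
                have h3 : i - 1 + 1 = i := by omega
                rw [h3] at h1
                omega
            · intro i hi
              simp only [hu2def]
              have h1 := huv i (by omega)
              have h2 := hveq i (by omega)
              rw [if_neg (by omega : ¬ i + 1 = 0)]
              have h3 : i + 1 - 1 = i := by omega
              rw [h3]
              omega
          · -- u (k-1) < ξ ( < u k if k ≤ t) : replace v (k-1) by ξ, S = Q.erase (qv (k-1))
            refine ⟨Q.erase (qv (k - 1)), Or.inl ⟨qv (k - 1), hqvQ (k - 1) (by omega), rfl⟩, ?_⟩
            refine notWS_of_long hrt ?_
            set v2 : ℕ → ℕ := fun m => if m = k - 1 then ξ else v m with hv2def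
            refine altLen_ge_uv Y _ (2 * t + 2) u v2 ?_ ?_ ?_ ?_
            · intro i hi; exact hD_er (k - 1) _ (hu_mem i (by omega))
            · intro i hi
              simp only [hv2def]
              by_cases h0 : i = k - 1
              · rw [if_pos h0]
                exact hE_er (k - 1) _ hξE (fun h => hξQ (h ▸ hqvQ (k - 1) (by omega)))
              · rw [if_neg h0]
                refine hE_er (k - 1) _ (hv_mem i (by omega)) ?_
                rw [hveq i (by omega)]
                intro h; exact h0 (hqv_inj i (by omega) (k - 1) (by omega) h)
            · intro i hi
              simp only [hv2def]
              by_cases h0 : i = k - 1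
              · rw [if_pos h0, h0]
                exact hklo (k - 1) (by omega) (by omega)
              · rw [if_neg h0]; exact huv i (by omega)
            · intro i hi
              simp only [hv2def]
              by_cases h0 : i = k - 1
              · rw [if_pos h0, h0]
                have h3 : k - 1 + 1 = k := by omega
                rw [h3]
                by_cases hkt : k = t + 1
                · omega
                · exact hkhi k (by omega) (by omega)
              · rw [if_neg h0]; exact hvu i (by omega)
    · -- CASE I-E : even positions in (X ∪ Q) \ Y
      have hu_mem : ∀ i, i ≤ t → u i ∈ (X ∪ Q) \ Y := by
        intro i hi
        simp only [hudef]
        rw [dif_pos (by omega : 2 * i < altLen Y (X ∪ Q))]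
        exact hev _ (by omega : 2 * i % 2 = 0)
      have hv_mem : ∀ i, i ≤ t → v i ∈ Y \ (X ∪ Q) := by
        intro i hi
        simp only [hvdef]
        rw [dif_pos (by omega : 2 * i + 1 < altLen Y (X ∪ Q))]
        exact hod _ (by omega : (2 * i + 1) % 2 = 1)
      have hvY : ∀ i, i ≤ t → v i ∈ Y := fun i hi => (mem_sdiff.1 (hv_mem i hi)).1
      have huY : ∀ i, i ≤ t → u i ∉ Y := fun i hi => (mem_sdiff.1 (hu_mem i hi)).2
      by_cases hused : ∃ j, j < t + 1 ∧ ∀ i, i ≤ t → u i ≠ qv j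
      · obtain ⟨j, hj, hjun⟩ := hused
        refine ⟨Q.erase (qv j), Or.inl ⟨qv j, hqvQ j hj, rfl⟩, ?_⟩
        refine notWS_of_long hrt ?_
        rw [altLen_comm]
        refine altLen_ge_uv (X ∪ Q.erase (qv j)) Y (2 * t + 2) u v ?_ ?_ ?_ ?_
        · intro i hi; exact hE_er j _ (hu_mem i (by omega)) (hjun i (by omega))
        · intro i hi; exact hD_er j _ (hv_mem i (by omega))
        · intro i hi; exact huv i (by omega)
        · intro i hi; exact hvu i (by omega)
      · push_neg at hused
        have hueq : ∀ i, i < t + 1 → u i = qv i := by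
          refine all_used (n := t + 1) (fun m hm => humono m hm) hqmono ?_
          intro j hj
          obtain ⟨i, hi, he⟩ := hused j hj
          exact ⟨i, by omega, he.symm⟩
        have hqvY : ∀ i, i < t + 1 → qv i ∉ Y := by
          intro i hi
          rw [← hueq i hi]
          exact huY i (by omega)
        by_cases hcard : (X ∪ Q).card ≤ Y.card
        · have hcard2 : X.card + (t + 1) ≤ Y.card := by rw [← hBcard]; exact hcard
          by_cases hPY : ∀ i, i < t → pv i ∈ Y
          · -- trick-D : S = Q.erase (qv 0), sequence p_0 q_1 p_1 ... q_t (v t)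
            refine ⟨Q.erase (qv 0), Or.inl ⟨qv 0, hqvQ 0 (by omega), rfl⟩, ?_⟩
            set u2 : ℕ → ℕ := fun i => if i < t then pv i else v t with hu2def
            set v2 : ℕ → ℕ := fun i => qv (i + 1) with hv2def
            refine notWS_D hrt (u := u2) (v := v2) ?_ ?_ ?_ ?_ ?_
            · intro i hi
              simp only [hu2def]
              by_cases h0 : i < t
              · rw [if_pos h0]; exact hD_er_p i h0 (hPY i h0) 0
              · rw [if_neg h0]; exact hD_er 0 _ (hv_mem t (by omega))
            · intro i hi
              simp only [hv2def]
              refine hE_er 0 _ ?_ ?_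
              · rw [← hueq (i + 1) (by omega)]; exact hu_mem (i + 1) (by omega)
              · intro h; have := hqv_inj (i + 1) (by omega) 0 (by omega) h; omega
            · intro i hi
              simp only [hu2def, hv2def]
              rw [if_pos hi]
              exact hqp2 i hi
            · intro i hi
              simp only [hu2def, hv2def]
              by_cases h0 : i + 1 < t
              · rw [if_pos h0]; exact hqp1 (i + 1) h0
              · rw [if_neg h0]
                have h1 : i + 1 = t := by omega
                have h2 := huv t (by omega)
                have h3 := hueq t (by omega)
                rw [h1]
                omega
            · rw [hSerase_card 0 (by omega)]; omega
          · push_neg at hPY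
            obtain ⟨i0, hi0, hpnY⟩ := hPY
            have hvne : ∀ i, i ≤ t → v i ≠ pv i0 := by
              intro i hi h
              exact hpnY (h ▸ hvY i hi)
            by_cases hcmp : pv i0 < v i0
            · refine ⟨insert (pv i0) (Q.erase (qv i0)),
                Or.inr ⟨pv i0, hpvP i0 hi0, qv i0, hqvQ i0 (by omega), rfl⟩, ?_⟩
              refine notWS_of_long hrt ?_
              rw [altLen_comm]
              set u2 : ℕ → ℕ := fun m => if m = i0 then pv i0 else u m with hu2def
              refine altLen_ge_uv (X ∪ insert (pv i0) (Q.erase (qv i0))) Y (2 * t + 2) u2 v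
                ?_ ?_ ?_ ?_
              · intro i hi
                simp only [hu2def]
                by_cases h0 : i = i0
                · rw [if_pos h0]; exact hE_sw_p i0 hi0 i0 hpnY
                · rw [if_neg h0]
                  refine hE_sw i0 i0 _ (hu_mem i (by omega)) ?_
                  rw [hueq i (by omega)]
                  intro h; exact h0 (hqv_inj i (by omega) i0 (by omega) h)
              · intro i hi
                exact hD_sw i0 hi0 i0 _ (hv_mem i (by omega)) (hvne i (by omega))
              · intro i hi
                simp only [hu2def]
                by_cases h0 : i = i0
                · rw [if_pos h0, h0]; exact hcmp
                · rw [if_neg h0]; exact huv i (by omega)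
              · intro i hi
                simp only [hu2def]
                by_cases h0 : i + 1 = i0
                · rw [if_pos h0]
                  have h1 := hvu i (by omega)
                  have h2 := hueq (i + 1) (by omega)
                  have h3 := hqp1 i0 hi0
                  rw [h0] at h1 h2
                  omega
                · rw [if_neg h0]; exact hvu i (by omega)
            · have hcmp' : v i0 < pv i0 := by
                have := hvne i0 (by omega)
                omega
              refine ⟨insert (pv i0) (Q.erase (qv (i0 + 1))),
                Or.inr ⟨pv i0, hpvP i0 hi0, qv (i0 + 1), hqvQ (i0 + 1) (by omega), rfl⟩, ?_⟩
              refine notWS_of_long hrt ?_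
              rw [altLen_comm]
              set u2 : ℕ → ℕ := fun m => if m = i0 + 1 then pv i0 else u m with hu2def
              refine altLen_ge_uv (X ∪ insert (pv i0) (Q.erase (qv (i0 + 1)))) Y (2 * t + 2)
                u2 v ?_ ?_ ?_ ?_
              · intro i hi
                simp only [hu2def]
                by_cases h0 : i = i0 + 1
                · rw [if_pos h0]; exact hE_sw_p i0 hi0 (i0 + 1) hpnY
                · rw [if_neg h0]
                  refine hE_sw i0 (i0 + 1) _ (hu_mem i (by omega)) ?_
                  rw [hueq i (by omega)]
                  intro h; exact h0 (hqv_inj i (by omega) (i0 + 1) (by omega) h)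
              · intro i hi
                exact hD_sw i0 hi0 (i0 + 1) _ (hv_mem i (by omega)) (hvne i (by omega))
              · intro i hi
                simp only [hu2def]
                by_cases h0 : i = i0 + 1
                · rw [if_pos h0, h0]
                  have h1 := hqp2 i0 hi0
                  have h2 := hueq (i0 + 1) (by omega)
                  have h3 := huv (i0 + 1) (by omega)
                  omega
                · rw [if_neg h0]; exact huv i (by omega)
              · intro i hi
                simp only [hu2def]
                by_cases h0 : i + 1 = i0 + 1
                · rw [if_pos h0]
                  have h1 : i = i0 := by omega
                  rw [h1]
                  exact hcmp'
                · rw [if_neg h0]; exact hvu i (by omega)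
        · -- Y.card < B.card : extra E element ξ outside Q
          have hYlt : Y.card < X.card + (t + 1) := by rw [← hBcard]; omega
          have hDcard : t + 1 ≤ (Y \ (X ∪ Q)).card := by
            have hsub : (Finset.range (t + 1)).image v ⊆ Y \ (X ∪ Q) := by
              intro x hx
              simp only [Finset.mem_image, Finset.mem_range] at hx
              obtain ⟨i, hi, rfl⟩ := hx
              exact hv_mem i (by omega)
            have hc : ((Finset.range (t + 1)).image v).card = t + 1 := by
              rw [Finset.card_image_of_injOn, Finset.card_range]
              intro a ha b hb hab
              simp only [Finset.coe_range, Set.mem_Iio] at ha hb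
              by_contra hne
              rcases Nat.lt_or_ge a b with h | h
              · have := chain_mono hvmono a b h hb; omega
              · have hlt : b < a := by omega
                have := chain_mono hvmono b a hlt ha; omega
            calc t + 1 = ((Finset.range (t + 1)).image v).card := hc.symm
            _ ≤ (Y \ (X ∪ Q)).card := Finset.card_le_card hsub
          have hkey := card_key Y (X ∪ Q)
          have hEcard : t + 2 ≤ ((X ∪ Q) \ Y).card := by omega
          have hξex : ∃ ξ, ξ ∈ (X ∪ Q) \ Y ∧ ξ ∉ Q := by
            by_contra hcon
            push_neg at hcon
            have hsub : (X ∪ Q) \ Y ⊆ Q := fun x hx => hcon x hx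
            have := Finset.card_le_card hsub
            omega
          obtain ⟨ξ, hξE, hξQ⟩ := hξex
          have hξY : ξ ∉ Y := (mem_sdiff.1 hξE).2
          have hξne : ∀ m, m < t + 1 → v m ≠ ξ := fun m hm h => hξY (h ▸ hvY m (by omega))
          obtain ⟨k, hk, hklo, hkhi⟩ := find_slot hvmono ξ hξne
          by_cases hkt : k = t + 1
          · -- ξ above v t : D-start sequence dropping qv 0, S = Q.erase (qv 0)
            refine ⟨Q.erase (qv 0), Or.inl ⟨qv 0, hqvQ 0 (by omega), rfl⟩, ?_⟩
            refine notWS_of_long hrt ?_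
            set v2 : ℕ → ℕ := fun i => if i = t then ξ else qv (i + 1) with hv2def
            refine altLen_ge_uv Y (X ∪ Q.erase (qv 0)) (2 * t + 2) v v2 ?_ ?_ ?_ ?_
            · intro i hi; exact hD_er 0 _ (hv_mem i (by omega))
            · intro i hi
              simp only [hv2def]
              by_cases h0 : i = t
              · rw [if_pos h0]; exact hE_er 0 _ hξE (fun h => hξQ (h ▸ hqvQ 0 (by omega)))
              · rw [if_neg h0]
                refine hE_er 0 _ ?_ ?_
                · rw [← hueq (i + 1) (by omega)]; exact hu_mem (i + 1) (by omega)
                · intro h; have := hqv_inj (i + 1) (by omega) 0 (by omega) h; omega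
            · intro i hi
              simp only [hv2def]
              by_cases h0 : i = t
              · rw [if_pos h0, h0]
                exact hklo t (by omega) (by omega)
              · rw [if_neg h0]
                have h1 := hvu i (by omega)
                have h2 := hueq (i + 1) (by omega)
                omega
            · intro i hi
              simp only [hv2def]
              rw [if_neg (by omega : ¬ i = t)]
              have h1 := huv (i + 1) (by omega)
              have h2 := hueq (i + 1) (by omega)
              omega
          · -- ξ below v k (k ≤ t) : replace u k by ξ, S = Q.erase (qv k)
            refine ⟨Q.erase (qv k), Or.inl ⟨qv k, hqvQ k (by omega), rfl⟩, ?_⟩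
            refine notWS_of_long hrt ?_
            rw [altLen_comm]
            set u2 : ℕ → ℕ := fun m => if m = k then ξ else u m with hu2def
            refine altLen_ge_uv (X ∪ Q.erase (qv k)) Y (2 * t + 2) u2 v ?_ ?_ ?_ ?_
            · intro i hi
              simp only [hu2def]
              by_cases h0 : i = k
              · rw [if_pos h0]; exact hE_er k _ hξE (fun h => hξQ (h ▸ hqvQ k (by omega)))
              · rw [if_neg h0]
                refine hE_er k _ (hu_mem i (by omega)) ?_
                rw [hueq i (by omega)]
                intro h; exact h0 (hqv_inj i (by omega) k (by omega) h)
            · intro i hi; exact hD_er k _ (hv_mem i (by omega))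
            · intro i hi
              simp only [hu2def]
              by_cases h0 : i = k
              · rw [if_pos h0, h0]
                exact hkhi k (by omega) (by omega)
              · rw [if_neg h0]; exact huv i (by omega)
            · intro i hi
              simp only [hu2def]
              by_cases h0 : i + 1 = k
              · rw [if_pos h0]
                have h1 := hklo i (by omega) (by omega)
                omega
              · rw [if_neg h0]; exact hvu i (by omega)
  · -- CASE II : altLen = 2t+1
    have hlen : altLen Y (X ∪ Q) = 2 * t + 1 := by omega
    have hbad2 : ¬ (Surrounds Y (X ∪ Q) ∧ Y.card ≤ (X ∪ Q).card ∨
        Surrounds (X ∪ Q) Y ∧ (X ∪ Q).card ≤ Y.card) := by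
      intro h
      exact hbad ⟨by omega, fun _ => h⟩
    obtain ⟨f, hfmono, hfside⟩ := altLen_spec Y (X ∪ Q)
    set u : ℕ → ℕ := fun i => if h : 2 * i < altLen Y (X ∪ Q) then f ⟨2 * i, h⟩ else 0 with hudef
    set v : ℕ → ℕ := fun i => if h : 2 * i + 1 < altLen Y (X ∪ Q) then f ⟨2 * i + 1, h⟩ else 0
      with hvdef
    have huv : ∀ i, i < t → u i < v i := by
      intro i hi
      simp only [hudef, hvdef]
      rw [dif_pos (by omega : 2 * i < altLen Y (X ∪ Q)),
        dif_pos (by omega : 2 * i + 1 < altLen Y (X ∪ Q))]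
      exact hfmono (Fin.mk_lt_mk.mpr (by omega))
    have hvu : ∀ i, i < t → v i < u (i + 1) := by
      intro i hi
      simp only [hudef, hvdef]
      rw [dif_pos (by omega : 2 * i + 1 < altLen Y (X ∪ Q)),
        dif_pos (by omega : 2 * (i + 1) < altLen Y (X ∪ Q))]
      exact hfmono (Fin.mk_lt_mk.mpr (by omega))
    have humono : ∀ m, m + 1 < t + 1 → u m < u (m + 1) := fun m hm =>
      lt_trans (huv m (by omega)) (hvu m (by omega))
    have hvmono : ∀ m, m + 1 < t → v m < v (m + 1) := fun m hm =>
      lt_trans (hvu m (by omega)) (huv (m + 1) (by omega))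
    rcases hfside with ⟨hev, hod⟩ | ⟨hev, hod⟩
    · -- CASE II-D : even positions in Y \ (X ∪ Q)
      have hu_mem : ∀ i, i ≤ t → u i ∈ Y \ (X ∪ Q) := by
        intro i hi
        simp only [hudef]
        rw [dif_pos (by omega : 2 * i < altLen Y (X ∪ Q))]
        exact hev _ (by omega : 2 * i % 2 = 0)
      have hv_mem : ∀ i, i < t → v i ∈ (X ∪ Q) \ Y := by
        intro i hi
        simp only [hvdef]
        rw [dif_pos (by omega : 2 * i + 1 < altLen Y (X ∪ Q))]
        exact hod _ (by omega : (2 * i + 1) % 2 = 1)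
      have huY : ∀ i, i ≤ t → u i ∈ Y := fun i hi => (mem_sdiff.1 (hu_mem i hi)).1
      have hlo : ∀ e ∈ (X ∪ Q) \ Y, u 0 < e := by
        intro e he
        have hne : e ≠ u 0 := fun h => (mem_sdiff.1 he).2 (h ▸ huY 0 (by omega))
        by_contra hlt
        have helt : e < u 0 := by omega
        have hcontra : 2 * t + 2 ≤ altLen (X ∪ Q) Y := by
          refine altLen_ge_uv (X ∪ Q) Y (2 * t + 2)
            (fun i => if i = 0 then e else v (i - 1)) u ?_ ?_ ?_ ?_
          · intro i hi
            by_cases h0 : i = 0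
            · simpa [h0] using he
            · simpa [h0] using hv_mem (i - 1) (by omega)
          · intro i hi
            exact hu_mem i (by omega)
          · intro i hi
            by_cases h0 : i = 0
            · simpa [h0] using helt
            · simp only [h0, if_false]
              have h1 := hvu (i - 1) (by omega)
              have h2 : i - 1 + 1 = i := by omega
              rw [h2] at h1
              exact h1
          · intro i hi
            simp only [Nat.add_sub_cancel, Nat.succ_ne_zero, if_false]
            exact huv i (by omega)
        rw [← altLen_comm Y (X ∪ Q)] at hcontra
        omega
      have hhi : ∀ e ∈ (X ∪ Q) \ Y, e < u t := by
        intro e he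
        have hne : e ≠ u t := fun h => (mem_sdiff.1 he).2 (h ▸ huY t (by omega))
        by_contra hlt
        have helt : u t < e := by omega
        have hcontra : 2 * t + 2 ≤ altLen Y (X ∪ Q) := by
          refine altLen_ge_uv Y (X ∪ Q) (2 * t + 2) u
            (fun i => if i = t then e else v i) ?_ ?_ ?_ ?_
          · intro i hi
            exact hu_mem i (by omega)
          · intro i hi
            by_cases h0 : i = t
            · simpa [h0] using he
            · simpa [h0] using hv_mem i (by omega)
          · intro i hi
            by_cases h0 : i = t
            · simpa [h0] using helt
            · simpa [h0] using huv i (by omega)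
          · intro i hi
            have h0 : i ≠ t := by omega
            simp only [h0, if_false]
            exact hvu i (by omega)
        omega
      have hsur : Surrounds Y (X ∪ Q) := by
        constructor
        · calc (Y \ (X ∪ Q)).min ≤ ((u 0 : ℕ) : WithTop ℕ) :=
            Finset.min_le (hu_mem 0 (by omega))
          _ < ((X ∪ Q) \ Y).min := lt_min_of hlo
        · calc ((X ∪ Q) \ Y).max < ((u t : ℕ) : WithBot ℕ) := max_lt_of hhi
          _ ≤ (Y \ (X ∪ Q)).max := Finset.le_max (hu_mem t (by omega))
      have hYgt : (X ∪ Q).card < Y.card := by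
        by_contra hle
        exact hbad2 (Or.inl ⟨hsur, by omega⟩)
      obtain ⟨j, hj, hjun⟩ := exists_unused qv (t + 1) hqv_inj (Finset.range t) v (by simp)
      refine ⟨Q.erase (qv j), Or.inl ⟨qv j, hqvQ j hj, rfl⟩, ?_⟩
      refine notWS_D hrt (u := u) (v := v) ?_ ?_ ?_ ?_ ?_
      · intro i hi; exact hD_er j _ (hu_mem i hi)
      · intro i hi
        exact hE_er j _ (hv_mem i hi) (hjun i (Finset.mem_range.mpr hi))
      · exact huv
      · exact hvu
      · rw [hSerase_card j hj]
        omega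
    · -- CASE II-E : even positions in (X ∪ Q) \ Y
      have hu_mem : ∀ i, i ≤ t → u i ∈ (X ∪ Q) \ Y := by
        intro i hi
        simp only [hudef]
        rw [dif_pos (by omega : 2 * i < altLen Y (X ∪ Q))]
        exact hev _ (by omega : 2 * i % 2 = 0)
      have hv_mem : ∀ i, i < t → v i ∈ Y \ (X ∪ Q) := by
        intro i hi
        simp only [hvdef]
        rw [dif_pos (by omega : 2 * i + 1 < altLen Y (X ∪ Q))]
        exact hod _ (by omega : (2 * i + 1) % 2 = 1)
      have huY : ∀ i, i ≤ t → u i ∉ Y := fun i hi => (mem_sdiff.1 (hu_mem i hi)).2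
      have hvY : ∀ i, i < t → v i ∈ Y := fun i hi => (mem_sdiff.1 (hv_mem i hi)).1
      have hlo : ∀ d ∈ Y \ (X ∪ Q), u 0 < d := by
        intro d hd
        have hne : d ≠ u 0 := fun h => huY 0 (by omega) (h ▸ (mem_sdiff.1 hd).1)
        by_contra hlt
        have hdlt : d < u 0 := by omega
        have hcontra : 2 * t + 2 ≤ altLen Y (X ∪ Q) := by
          refine altLen_ge_uv Y (X ∪ Q) (2 * t + 2)
            (fun i => if i = 0 then d else v (i - 1)) u ?_ ?_ ?_ ?_
          · intro i hi
            by_cases h0 : i = 0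
            · simpa [h0] using hd
            · simpa [h0] using hv_mem (i - 1) (by omega)
          · intro i hi
            exact hu_mem i (by omega)
          · intro i hi
            by_cases h0 : i = 0
            · simpa [h0] using hdlt
            · simp only [h0, if_false]
              have h1 := hvu (i - 1) (by omega)
              have h2 : i - 1 + 1 = i := by omega
              rw [h2] at h1
              exact h1
          · intro i hi
            simp only [Nat.add_sub_cancel, Nat.succ_ne_zero, if_false]
            exact huv i (by omega)
        omega
      have hhi : ∀ d ∈ Y \ (X ∪ Q), d < u t := by
        intro d hd
        have hne : d ≠ u t := fun h => huY t (by omega) (h ▸ (mem_sdiff.1 hd).1)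
        by_contra hlt
        have hdlt : u t < d := by omega
        have hcontra : 2 * t + 2 ≤ altLen (X ∪ Q) Y := by
          refine altLen_ge_uv (X ∪ Q) Y (2 * t + 2) u
            (fun i => if i = t then d else v i) ?_ ?_ ?_ ?_
          · intro i hi
            exact hu_mem i (by omega)
          · intro i hi
            by_cases h0 : i = t
            · simpa [h0] using hd
            · simpa [h0] using hv_mem i (by omega)
          · intro i hi
            by_cases h0 : i = t
            · simpa [h0] using hdlt
            · simpa [h0] using huv i (by omega)
          · intro i hi
            have h0 : i ≠ t := by omega
            simp only [h0, if_false]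
            exact hvu i (by omega)
        rw [← altLen_comm Y (X ∪ Q)] at hcontra
        omega
      have hsur : Surrounds (X ∪ Q) Y := by
        constructor
        · calc ((X ∪ Q) \ Y).min ≤ ((u 0 : ℕ) : WithTop ℕ) :=
            Finset.min_le (hu_mem 0 (by omega))
          _ < (Y \ (X ∪ Q)).min := lt_min_of hlo
        · calc (Y \ (X ∪ Q)).max < ((u t : ℕ) : WithBot ℕ) := max_lt_of hhi
          _ ≤ ((X ∪ Q) \ Y).max := Finset.le_max (hu_mem t (by omega))
      have hBgt : Y.card < (X ∪ Q).card := by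
        by_contra hle
        exact hbad2 (Or.inr ⟨hsur, by omega⟩)
      by_cases hc2 : Y.card + 2 ≤ (X ∪ Q).card
      · -- |B| ≥ |Y| + 2
        by_cases hused : ∃ j, j < t + 1 ∧ ∀ i, i ≤ t → u i ≠ qv j
        · obtain ⟨j, hj, hjun⟩ := hused
          refine ⟨Q.erase (qv j), Or.inl ⟨qv j, hqvQ j hj, rfl⟩, ?_⟩
          refine notWS_E hrt (u := u) (v := v) ?_ ?_ ?_ ?_ ?_
          · intro i hi; exact hE_er j _ (hu_mem i hi) (hjun i hi)
          · intro i hi; exact hD_er j _ (hv_mem i hi)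
          · exact huv
          · exact hvu
          · rw [hSerase_card j hj]
            have := hBcard
            omega
        · push_neg at hused
          have hueq : ∀ i, i < t + 1 → u i = qv i := by
            refine all_used (n := t + 1) (fun m hm => humono m hm) hqmono ?_
            intro j hj
            obtain ⟨i, hi, he⟩ := hused j hj
            exact ⟨i, by omega, he.symm⟩
          have hDcard : t ≤ (Y \ (X ∪ Q)).card := by
            have hsub : (Finset.range t).image v ⊆ Y \ (X ∪ Q) := by
              intro x hx
              simp only [Finset.mem_image, Finset.mem_range] at hx
              obtain ⟨i, hi, rfl⟩ := hx
              exact hv_mem i hi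
            have hc : ((Finset.range t).image v).card = t := by
              rw [Finset.card_image_of_injOn, Finset.card_range]
              intro a ha b hb hab
              simp only [Finset.coe_range, Set.mem_Iio] at ha hb
              by_contra hne
              rcases Nat.lt_or_ge a b with h | h
              · have := chain_mono hvmono a b h hb; omega
              · have hlt : b < a := by omega
                have := chain_mono hvmono b a hlt ha; omega
            calc t = ((Finset.range t).image v).card := hc.symm
            _ ≤ (Y \ (X ∪ Q)).card := Finset.card_le_card hsub
          have hkey := card_key Y (X ∪ Q)
          have hEcard : t + 2 ≤ ((X ∪ Q) \ Y).card := by omega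
          have hξex : ∃ ξ, ξ ∈ (X ∪ Q) \ Y ∧ ξ ∉ Q := by
            by_contra hcon
            push_neg at hcon
            have hsub : (X ∪ Q) \ Y ⊆ Q := fun x hx => hcon x hx
            have := Finset.card_le_card hsub
            omega
          obtain ⟨ξ, hξE, hξQ⟩ := hξex
          have hξY : ξ ∉ Y := (mem_sdiff.1 hξE).2
          have hξne : ∀ m, m < t → v m ≠ ξ := fun m hm h => hξY (h ▸ hvY m hm)
          obtain ⟨k, hk, hklo, hkhi⟩ := find_slot hvmono ξ hξne
          refine ⟨Q.erase (qv k), Or.inl ⟨qv k, hqvQ k (by omega), rfl⟩, ?_⟩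
          set u2 : ℕ → ℕ := fun m => if m = k then ξ else u m with hu2def
          refine notWS_E hrt (u := u2) (v := v) ?_ ?_ ?_ ?_ ?_
          · intro i hi
            simp only [hu2def]
            by_cases h0 : i = k
            · rw [if_pos h0]
              exact hE_er k _ hξE (fun h => hξQ (h ▸ hqvQ k (by omega)))
            · rw [if_neg h0]
              refine hE_er k _ (hu_mem i hi) ?_
              rw [hueq i (by omega)]
              intro h; exact h0 (hqv_inj i (by omega) k (by omega) h)
          · intro i hi; exact hD_er k _ (hv_mem i hi)
          · intro i hi
            simp only [hu2def]
            by_cases h0 : i = k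
            · rw [if_pos h0, h0]
              exact hkhi k (by omega) (by omega)
            · rw [if_neg h0]; exact huv i hi
          · intro i hi
            simp only [hu2def]
            by_cases h0 : i + 1 = k
            · rw [if_pos h0]
              exact hklo i (by omega) (by omega)
            · rw [if_neg h0]; exact hvu i hi
          · rw [hSerase_card k (by omega)]
            have := hBcard
            omega
      · -- |B| = |Y| + 1
        have hc1 : (X ∪ Q).card = Y.card + 1 := by omega
        have hcardS : Y.card < X.card + (t + 1) := by
          rw [← hBcard]; omega
        by_cases hQY : ∃ j, j < t + 1 ∧ qv j ∈ Y
        · obtain ⟨j, hj, hjY⟩ := hQY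
          have hqju : ∀ m, m < t + 1 → u m ≠ qv j := fun m hm h =>
            huY m (by omega) (h ▸ hjY)
          obtain ⟨k, hk, hklo, hkhi⟩ := find_slot humono (qv j) hqju
          by_cases hk0 : k = 0
          · -- qv j below u 0 : prepend, D-start 2t+2 sequence
            refine ⟨Q.erase (qv j), Or.inl ⟨qv j, hqvQ j hj, rfl⟩, ?_⟩
            refine notWS_of_long hrt ?_
            set u2 : ℕ → ℕ := fun i => if i = 0 then qv j else v (i - 1) with hu2def
            refine altLen_ge_uv Y (X ∪ Q.erase (qv j)) (2 * t + 2) u2 u ?_ ?_ ?_ ?_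
            · intro i hi
              simp only [hu2def]
              by_cases h0 : i = 0
              · rw [if_pos h0]; exact hD_er_q j hj hjY
              · rw [if_neg h0]; exact hD_er j _ (hv_mem (i - 1) (by omega))
            · intro i hi
              exact hE_er j _ (hu_mem i (by omega)) (hqju i (by omega))
            · intro i hi
              simp only [hu2def]
              by_cases h0 : i = 0
              · rw [if_pos h0, h0]
                exact hkhi 0 (by omega) (by omega)
              · rw [if_neg h0]
                have h1 := hvu (i - 1) (by omega)
                have h2 : i - 1 + 1 = i := by omega
                rw [h2] at h1
                exact h1
            · intro i hi
              simp only [hu2def]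
              rw [if_neg (by omega : ¬ i + 1 = 0)]
              have h3 : i + 1 - 1 = i := by omega
              rw [h3]
              exact huv i (by omega)
          · by_cases hkt : k = t + 1
            · -- qv j above u t : append, E-start 2t+2 sequence
              refine ⟨Q.erase (qv j), Or.inl ⟨qv j, hqvQ j hj, rfl⟩, ?_⟩
              refine notWS_of_long hrt ?_
              rw [altLen_comm]
              set v2 : ℕ → ℕ := fun i => if i = t then qv j else v i with hv2def
              refine altLen_ge_uv (X ∪ Q.erase (qv j)) Y (2 * t + 2) u v2 ?_ ?_ ?_ ?_
              · intro i hi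
                exact hE_er j _ (hu_mem i (by omega)) (hqju i (by omega))
              · intro i hi
                simp only [hv2def]
                by_cases h0 : i = t
                · rw [if_pos h0]; exact hD_er_q j hj hjY
                · rw [if_neg h0]; exact hD_er j _ (hv_mem i (by omega))
              · intro i hi
                simp only [hv2def]
                by_cases h0 : i = t
                · rw [if_pos h0, h0]
                  exact hklo t (by omega) (by omega)
                · rw [if_neg h0]; exact huv i (by omega)
              · intro i hi
                simp only [hv2def]
                rw [if_neg (by omega : ¬ i = t)]
                exact hvu i (by omega)
            · -- u (k-1) < qv j < u k : swap in a p and replace v (k-1)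
              obtain ⟨i0, hi0, hi0un⟩ := exists_unused pv t hpv_inj
                ((Finset.range t).erase (k - 1)) v
                (by
                  calc ((Finset.range t).erase (k - 1)).card < (Finset.range t).card :=
                    Finset.card_erase_lt_of_mem (Finset.mem_range.mpr (by omega))
                  _ = t := Finset.card_range t)
              refine ⟨insert (pv i0) (Q.erase (qv j)),
                Or.inr ⟨pv i0, hpvP i0 hi0, qv j, hqvQ j hj, rfl⟩, ?_⟩
              set v2 : ℕ → ℕ := fun m => if m = k - 1 then qv j else v m with hv2def
              refine notWS_E hrt (u := u) (v := v2) ?_ ?_ ?_ ?_ ?_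
              · intro i hi
                exact hE_sw i0 j _ (hu_mem i hi) (hqju i (by omega))
              · intro i hi
                simp only [hv2def]
                by_cases h0 : i = k - 1
                · rw [if_pos h0]; exact hD_sw_q i0 hi0 j hj hjY
                · rw [if_neg h0]
                  refine hD_sw i0 hi0 j _ (hv_mem i hi) ?_
                  intro h
                  exact hi0un i (Finset.mem_erase.mpr ⟨h0, Finset.mem_range.mpr hi⟩) h
              · intro i hi
                simp only [hv2def]
                by_cases h0 : i = k - 1
                · rw [if_pos h0, h0]
                  exact hklo (k - 1) (by omega) (by omega)
                · rw [if_neg h0]; exact huv i hi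
              · intro i hi
                simp only [hv2def]
                by_cases h0 : i = k - 1
                · rw [if_pos h0, h0]
                  have h3 : k - 1 + 1 = k := by omega
                  rw [h3]
                  exact hkhi k (by omega) (by omega)
                · rw [if_neg h0]; exact hvu i hi
              · rw [hSswap_card i0 hi0 j hj]
                exact hcardS
        · push_neg at hQY
          have hqvE : ∀ j, j < t + 1 → qv j ∈ (X ∪ Q) \ Y := fun j hj =>
            mem_sdiff.mpr ⟨mem_union_right _ (hqvQ j hj), hQY j hj⟩
          by_cases hused : ∃ j, j < t + 1 ∧ ∀ i, i ≤ t → u i ≠ qv j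
          · obtain ⟨j, hj, hjun⟩ := hused
            by_cases hpd : ∃ i0, i0 < t ∧ ∀ m, m < t → v m ≠ pv i0
            · obtain ⟨i0, hi0, hi0un⟩ := hpd
              refine ⟨insert (pv i0) (Q.erase (qv j)),
                Or.inr ⟨pv i0, hpvP i0 hi0, qv j, hqvQ j hj, rfl⟩, ?_⟩
              refine notWS_E hrt (u := u) (v := v) ?_ ?_ ?_ ?_ ?_
              · intro i hi; exact hE_sw i0 j _ (hu_mem i hi) (hjun i hi)
              · intro i hi; exact hD_sw i0 hi0 j _ (hv_mem i hi) (hi0un i hi)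
              · exact huv
              · exact hvu
              · rw [hSswap_card i0 hi0 j hj]
                exact hcardS
            · push_neg at hpd
              have hvals : ∀ m, m < t → v m = pv m := by
                refine all_used (fun m hm => hvmono m hm) hpmono ?_
                intro j2 hj2
                obtain ⟨m, hm, he⟩ := hpd j2 hj2
                exact ⟨m, hm, he.symm⟩
              by_cases hδ : ∃ δ, δ ∈ Y \ (X ∪ Q) ∧ ∀ m, m < t → δ ≠ v m
              · obtain ⟨δ, hδD, hδun⟩ := hδ
                have hδne : ∀ m, m < t + 1 → u m ≠ δ := fun m hm h =>
                  huY m (by omega) (h ▸ (mem_sdiff.1 hδD).1)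
                obtain ⟨k, hk, hklo, hkhi⟩ := find_slot humono δ hδne
                have hk0 : k ≠ 0 := by
                  intro h0
                  have h1 := hlo δ hδD
                  have h2 := hkhi 0 (by omega) (by omega)
                  omega
                have hkt : k ≠ t + 1 := by
                  intro h0
                  have h1 := hhi δ hδD
                  have h2 := hklo t (by omega) (by omega)
                  omega
                have hk1t : k - 1 < t := by omega
                refine ⟨insert (pv (k - 1)) (Q.erase (qv j)),
                  Or.inr ⟨pv (k - 1), hpvP (k - 1) hk1t, qv j, hqvQ j hj, rfl⟩, ?_⟩
                set v2 : ℕ → ℕ := fun m => if m = k - 1 then δ else v m with hv2def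
                refine notWS_E hrt (u := u) (v := v2) ?_ ?_ ?_ ?_ ?_
                · intro i hi; exact hE_sw (k - 1) j _ (hu_mem i hi) (hjun i hi)
                · intro i hi
                  simp only [hv2def]
                  by_cases h0 : i = k - 1
                  · rw [if_pos h0]
                    refine hD_sw (k - 1) hk1t j _ hδD ?_
                    intro h
                    exact hδun (k - 1) hk1t (h.trans (hvals (k - 1) hk1t).symm)
                  · rw [if_neg h0]
                    refine hD_sw (k - 1) hk1t j _ (hv_mem i hi) ?_
                    intro h
                    rw [hvals i hi] at h
                    exact h0 (hpv_inj i hi (k - 1) hk1t h)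
                · intro i hi
                  simp only [hv2def]
                  by_cases h0 : i = k - 1
                  · rw [if_pos h0, h0]
                    exact hklo (k - 1) (by omega) (by omega)
                  · rw [if_neg h0]; exact huv i hi
                · intro i hi
                  simp only [hv2def]
                  by_cases h0 : i = k - 1
                  · rw [if_pos h0, h0]
                    have h3 : k - 1 + 1 = k := by omega
                    rw [h3]
                    exact hkhi k (by omega) (by omega)
                  · rw [if_neg h0]; exact hvu i hi
                · rw [hSswap_card (k - 1) hk1t j hj]
                  exact hcardS
              · push_neg at hδ
                exfalso
                have hDsub : Y \ (X ∪ Q) ⊆ (Finset.range t).image v := by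
                  intro x hx
                  obtain ⟨m, hm, heq⟩ := hδ x hx
                  exact Finset.mem_image.mpr ⟨m, Finset.mem_range.mpr hm, heq.symm⟩
                have hDle : (Y \ (X ∪ Q)).card ≤ t := by
                  calc (Y \ (X ∪ Q)).card ≤ ((Finset.range t).image v).card :=
                    Finset.card_le_card hDsub
                  _ ≤ t := le_trans Finset.card_image_le (le_of_eq (Finset.card_range t))
                have himc : ((Finset.range (t + 1)).image u).card = t + 1 := by
                  rw [Finset.card_image_of_injOn, Finset.card_range]
                  intro a ha b hb hab
                  simp only [Finset.coe_range, Set.mem_Iio] at ha hb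
                  by_contra hne
                  rcases Nat.lt_or_ge a b with h | h
                  · have := chain_mono humono a b h hb; omega
                  · have hlt : b < a := by omega
                    have := chain_mono humono b a hlt ha; omega
                have hEge : t + 2 ≤ ((X ∪ Q) \ Y).card := by
                  have hsub : insert (qv j) ((Finset.range (t + 1)).image u) ⊆
                      (X ∪ Q) \ Y := by
                    intro x hx
                    rcases Finset.mem_insert.1 hx with rfl | hx2
                    · exact hqvE j hj
                    · obtain ⟨i, hi, rfl⟩ := Finset.mem_image.1 hx2
                      exact hu_mem i (by
                        simp only [Finset.mem_range] at hi
                        omega)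
                  have hnm : qv j ∉ (Finset.range (t + 1)).image u := by
                    intro hmem
                    obtain ⟨i, hi, heq⟩ := Finset.mem_image.1 hmem
                    simp only [Finset.mem_range] at hi
                    exact hjun i (by omega) heq
                  have hic : (insert (qv j) ((Finset.range (t + 1)).image u)).card = t + 2 := by
                    rw [Finset.card_insert_of_notMem hnm, himc]
                  have hle2 := Finset.card_le_card hsub
                  omega
                have hkey := card_key Y (X ∪ Q)
                omega
          · push_neg at hused
            have hueq : ∀ i, i < t + 1 → u i = qv i := by
              refine all_used (n := t + 1) (fun m hm => humono m hm) hqmono ?_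
              intro j hj
              obtain ⟨i, hi, he⟩ := hused j hj
              exact ⟨i, by omega, he.symm⟩
            by_cases hPY : ∀ i, i < t → pv i ∈ Y
            · have hpvD : ∀ i, i < t → pv i ∈ Y \ (X ∪ Q) := by
                intro i hi
                simp only [mem_sdiff, mem_union]
                push_neg
                exact ⟨hPY i hi, hpvX i hi, hpvQ i hi⟩
              by_cases hpd : ∃ i0, i0 < t ∧ ∀ m, m < t → v m ≠ pv i0
              · obtain ⟨i0, hi0, hi0un⟩ := hpd
                have hDcard : t + 1 ≤ (Y \ (X ∪ Q)).card := by
                  have hsub : insert (pv i0) ((Finset.range t).image v) ⊆ Y \ (X ∪ Q) := by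
                    intro x hx
                    rcases Finset.mem_insert.1 hx with rfl | hx2
                    · exact hpvD i0 hi0
                    · obtain ⟨m, hm, rfl⟩ := Finset.mem_image.1 hx2
                      simp only [Finset.mem_range] at hm
                      exact hv_mem m hm
                  have hnm : pv i0 ∉ (Finset.range t).image v := by
                    intro hmem
                    obtain ⟨m, hm, heq⟩ := Finset.mem_image.1 hmem
                    simp only [Finset.mem_range] at hm
                    exact hi0un m hm heq
                  have hvimc : ((Finset.range t).image v).card = t := by
                    rw [Finset.card_image_of_injOn, Finset.card_range]
                    intro a ha b hb hab
                    simp only [Finset.coe_range, Set.mem_Iio] at ha hb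
                    by_contra hne
                    rcases Nat.lt_or_ge a b with h | h
                    · have := chain_mono hvmono a b h hb; omega
                    · have hlt : b < a := by omega
                      have := chain_mono hvmono b a hlt ha; omega
                  have hic : (insert (pv i0) ((Finset.range t).image v)).card = t + 1 := by
                    rw [Finset.card_insert_of_notMem hnm, hvimc]
                  have hle2 := Finset.card_le_card hsub
                  omega
                have hkey := card_key Y (X ∪ Q)
                have hEcard : t + 2 ≤ ((X ∪ Q) \ Y).card := by omega
                have hξex : ∃ ξ, ξ ∈ (X ∪ Q) \ Y ∧ ξ ∉ Q := by
                  by_contra hcon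
                  push_neg at hcon
                  have hsub : (X ∪ Q) \ Y ⊆ Q := fun x hx => hcon x hx
                  have := Finset.card_le_card hsub
                  omega
                obtain ⟨ξ, hξE, hξQ⟩ := hξex
                have hξY : ξ ∉ Y := (mem_sdiff.1 hξE).2
                have hξne : ∀ m, m < t → v m ≠ ξ := fun m hm h => hξY (h ▸ hvY m hm)
                obtain ⟨k, hk, hklo, hkhi⟩ := find_slot hvmono ξ hξne
                refine ⟨insert (pv i0) (Q.erase (qv k)),
                  Or.inr ⟨pv i0, hpvP i0 hi0, qv k, hqvQ k (by omega), rfl⟩, ?_⟩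
                set u2 : ℕ → ℕ := fun m => if m = k then ξ else u m with hu2def
                refine notWS_E hrt (u := u2) (v := v) ?_ ?_ ?_ ?_ ?_
                · intro i hi
                  simp only [hu2def]
                  by_cases h0 : i = k
                  · rw [if_pos h0]
                    exact hE_sw i0 k _ hξE (fun h => hξQ (h ▸ hqvQ k (by omega)))
                  · rw [if_neg h0]
                    refine hE_sw i0 k _ (hu_mem i hi) ?_
                    rw [hueq i (by omega)]
                    intro h; exact h0 (hqv_inj i (by omega) k (by omega) h)
                · intro i hi; exact hD_sw i0 hi0 k _ (hv_mem i hi) (hi0un i hi)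
                · intro i hi
                  simp only [hu2def]
                  by_cases h0 : i = k
                  · rw [if_pos h0, h0]
                    exact hkhi k (by omega) (by omega)
                  · rw [if_neg h0]; exact huv i hi
                · intro i hi
                  simp only [hu2def]
                  by_cases h0 : i + 1 = k
                  · rw [if_pos h0]
                    exact hklo i (by omega) (by omega)
                  · rw [if_neg h0]; exact hvu i hi
                · rw [hSswap_card i0 hi0 k (by omega)]
                  exact hcardS
              · push_neg at hpd
                have hvals : ∀ m, m < t → v m = pv m := by
                  refine all_used (fun m hm => hvmono m hm) hpmono ?_
                  intro j2 hj2
                  obtain ⟨m, hm, he⟩ := hpd j2 hj2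
                  exact ⟨m, hm, he.symm⟩
                by_cases hδ : ∃ δ, δ ∈ Y \ (X ∪ Q) ∧ ∀ m, m < t → δ ≠ v m
                · obtain ⟨δ, hδD, hδun⟩ := hδ
                  have hδne : ∀ m, m < t + 1 → u m ≠ δ := fun m hm h =>
                    huY m (by omega) (h ▸ (mem_sdiff.1 hδD).1)
                  obtain ⟨k, hk, hklo, hkhi⟩ := find_slot humono δ hδne
                  have hk0 : k ≠ 0 := by
                    intro h0
                    have h1 := hlo δ hδD
                    have h2 := hkhi 0 (by omega) (by omega)
                    omega
                  have hkt : k ≠ t + 1 := by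
                    intro h0
                    have h1 := hhi δ hδD
                    have h2 := hklo t (by omega) (by omega)
                    omega
                  have hk1t : k - 1 < t := by omega
                  set v2 : ℕ → ℕ := fun m => if m = k - 1 then δ else v m with hv2def
                  have hv2Y : ∀ m, m < t → v2 m ∈ Y := by
                    intro m hm
                    simp only [hv2def]
                    by_cases h0 : m = k - 1
                    · rw [if_pos h0]; exact (mem_sdiff.1 hδD).1
                    · rw [if_neg h0]; exact hvY m hm
                  have hv2mono : ∀ m, m + 1 < t → v2 m < v2 (m + 1) := by
                    intro m hm
                    simp only [hv2def]
                    by_cases h0 : m = k - 1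
                    · rw [if_pos h0, if_neg (by omega : ¬ m + 1 = k - 1)]
                      have h1 := hkhi k (by omega) (by omega)
                      have h2 := huv k (by omega)
                      have h3 : m + 1 = k := by omega
                      rw [h3]
                      omega
                    · rw [if_neg h0]
                      by_cases h1 : m + 1 = k - 1
                      · rw [if_pos h1]
                        have h2 := hvu m (by omega)
                        have h3 := hklo (k - 1) (by omega) (by omega)
                        rw [h1] at h2
                        omega
                      · rw [if_neg h1]
                        exact hvmono m hm
                  have hδD' := hδD
                  have hDcard : t + 1 ≤ (Y \ (X ∪ Q)).card := by
                    have hsub : insert δ ((Finset.range t).image v) ⊆ Y \ (X ∪ Q) := by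
                      intro x hx
                      rcases Finset.mem_insert.1 hx with rfl | hx2
                      · exact hδD
                      · obtain ⟨m, hm, rfl⟩ := Finset.mem_image.1 hx2
                        simp only [Finset.mem_range] at hm
                        exact hv_mem m hm
                    have hnm : δ ∉ (Finset.range t).image v := by
                      intro hmem
                      obtain ⟨m, hm, heq⟩ := Finset.mem_image.1 hmem
                      simp only [Finset.mem_range] at hm
                      exact hδun m hm heq.symm
                    have hvimc : ((Finset.range t).image v).card = t := by
                      rw [Finset.card_image_of_injOn, Finset.card_range]
                      intro a ha b hb hab
                      simp only [Finset.coe_range, Set.mem_Iio] at ha hb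
                      by_contra hne
                      rcases Nat.lt_or_ge a b with h | h
                      · have := chain_mono hvmono a b h hb; omega
                      · have hlt : b < a := by omega
                        have := chain_mono hvmono b a hlt ha; omega
                    have hic : (insert δ ((Finset.range t).image v)).card = t + 1 := by
                      rw [Finset.card_insert_of_notMem hnm, hvimc]
                    have hle2 := Finset.card_le_card hsub
                    omega
                  have hkey := card_key Y (X ∪ Q)
                  have hEcard : t + 2 ≤ ((X ∪ Q) \ Y).card := by omega
                  have hξex : ∃ ξ, ξ ∈ (X ∪ Q) \ Y ∧ ξ ∉ Q := by
                    by_contra hcon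
                    push_neg at hcon
                    have hsub : (X ∪ Q) \ Y ⊆ Q := fun x hx => hcon x hx
                    have := Finset.card_le_card hsub
                    omega
                  obtain ⟨ξ, hξE, hξQ⟩ := hξex
                  have hξY : ξ ∉ Y := (mem_sdiff.1 hξE).2
                  have hξne : ∀ m, m < t → v2 m ≠ ξ := fun m hm h => hξY (h ▸ hv2Y m hm)
                  obtain ⟨k2, hk2, hklo2, hkhi2⟩ := find_slot hv2mono ξ hξne
                  refine ⟨insert (pv (k - 1)) (Q.erase (qv k2)),
                    Or.inr ⟨pv (k - 1), hpvP (k - 1) hk1t, qv k2, hqvQ k2 (by omega), rfl⟩, ?_⟩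
                  set u2 : ℕ → ℕ := fun m => if m = k2 then ξ else u m with hu2def
                  refine notWS_E hrt (u := u2) (v := v2) ?_ ?_ ?_ ?_ ?_
                  · intro i hi
                    simp only [hu2def]
                    by_cases h0 : i = k2
                    · rw [if_pos h0]
                      exact hE_sw (k - 1) k2 _ hξE (fun h => hξQ (h ▸ hqvQ k2 (by omega)))
                    · rw [if_neg h0]
                      refine hE_sw (k - 1) k2 _ (hu_mem i hi) ?_
                      rw [hueq i (by omega)]
                      intro h; exact h0 (hqv_inj i (by omega) k2 (by omega) h)
                  · intro i hi
                    simp only [hv2def]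
                    by_cases h0 : i = k - 1
                    · rw [if_pos h0]
                      refine hD_sw (k - 1) hk1t k2 _ hδD' ?_
                      intro h
                      exact hδun (k - 1) hk1t (h.trans (hvals (k - 1) hk1t).symm)
                    · rw [if_neg h0]
                      refine hD_sw (k - 1) hk1t k2 _ (hv_mem i hi) ?_
                      intro h
                      rw [hvals i hi] at h
                      exact h0 (hpv_inj i hi (k - 1) hk1t h)
                  · intro i hi
                    simp only [hu2def]
                    by_cases h0 : i = k2
                    · rw [if_pos h0, h0]
                      exact hkhi2 k2 (by omega) (by omega)
                    · rw [if_neg h0]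
                      simp only [hv2def]
                      by_cases h1 : i = k - 1
                      · rw [if_pos h1, h1]
                        exact hklo (k - 1) (by omega) (by omega)
                      · rw [if_neg h1]
                        exact huv i hi
                  · intro i hi
                    simp only [hu2def]
                    by_cases h0 : i + 1 = k2
                    · rw [if_pos h0]
                      have := hklo2 i (by omega) (by omega)
                      simp only [hv2def] at this
                      simp only [hv2def]
                      exact this
                    · rw [if_neg h0]
                      simp only [hv2def]
                      by_cases h1 : i = k - 1
                      · rw [if_pos h1]
                        have h3 : k - 1 + 1 = k := by omega
                        have h4 := hkhi k (by omega) (by omega)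
                        rw [h1, h3]
                        exact h4
                      · rw [if_neg h1]
                        exact hvu i hi
                  · rw [hSswap_card (k - 1) hk1t k2 (by omega)]
                    exact hcardS
                · push_neg at hδ
                  exfalso
                  have hDsub : Y \ (X ∪ Q) ⊆ (Finset.range t).image v := by
                    intro x hx
                    obtain ⟨m, hm, heq⟩ := hδ x hx
                    exact Finset.mem_image.mpr ⟨m, Finset.mem_range.mpr hm, heq.symm⟩
                  have hDle : (Y \ (X ∪ Q)).card ≤ t := by
                    calc (Y \ (X ∪ Q)).card ≤ ((Finset.range t).image v).card :=
                      Finset.card_le_card hDsub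
                    _ ≤ t := le_trans Finset.card_image_le (le_of_eq (Finset.card_range t))
                  have himc : ((Finset.range (t + 1)).image u).card = t + 1 := by
                    rw [Finset.card_image_of_injOn, Finset.card_range]
                    intro a ha b hb hab
                    simp only [Finset.coe_range, Set.mem_Iio] at ha hb
                    by_contra hne
                    rcases Nat.lt_or_ge a b with h | h
                    · have := chain_mono humono a b h hb; omega
                    · have hlt : b < a := by omega
                      have := chain_mono humono b a hlt ha; omega
                  have huim_sub : (Finset.range (t + 1)).image u ⊆ (X ∪ Q) \ Y := by
                    intro x hx
                    obtain ⟨i, hi, rfl⟩ := Finset.mem_image.1 hx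
                    simp only [Finset.mem_range] at hi
                    exact hu_mem i (by omega)
                  have hkey := card_key Y (X ∪ Q)
                  have hEub : ((X ∪ Q) \ Y).card ≤ t + 1 := by omega
                  have hEeq : (Finset.range (t + 1)).image u = (X ∪ Q) \ Y :=
                    Finset.eq_of_subset_of_card_le huim_sub (by omega)
                  have hEQ : ∀ e ∈ (X ∪ Q) \ Y, e ∈ Q := by
                    intro e he
                    rw [← hEeq] at he
                    obtain ⟨i, hi, rfl⟩ := Finset.mem_image.1 he
                    simp only [Finset.mem_range] at hi
                    rw [hueq i hi]
                    exact hqvQ i hi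
                  have hXY : X ⊆ Y := by
                    intro x hx
                    by_contra hxY
                    have hxE : x ∈ (X ∪ Q) \ Y :=
                      mem_sdiff.mpr ⟨mem_union_left _ hx, hxY⟩
                    exact (hXPQ x hx).2 (hEQ x hxE)
                  have hYeq : Y = X ∪ P := by
                    ext x
                    simp only [mem_union]
                    constructor
                    · intro hx
                      by_cases hxB : x ∈ X ∪ Q
                      · rcases mem_union.1 hxB with h | h
                        · exact Or.inl h
                        · obtain ⟨j, hj, rfl⟩ := hQimg x h
                          exact absurd hx (hQY j hj)
                      · have hxD : x ∈ Y \ (X ∪ Q) := mem_sdiff.mpr ⟨hx, hxB⟩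
                        obtain ⟨m, hm, heq⟩ := hδ x hxD
                        right
                        rw [heq, hvals m hm]
                        exact hpvP m hm
                    · intro hx
                      rcases hx with h | h
                      · exact hXY h
                      · obtain ⟨i, hi, heq⟩ := hPimg x h
                        rw [heq]
                        exact hPY i hi
                  exact absurd hYeq hYP
            · push_neg at hPY
              obtain ⟨i0, hi0, hpnY⟩ := hPY
              have hvne : ∀ m, m < t → v m ≠ pv i0 := fun m hm h => hpnY (h ▸ hvY m hm)
              by_cases hcmp : pv i0 < v i0
              · refine ⟨insert (pv i0) (Q.erase (qv i0)),
                  Or.inr ⟨pv i0, hpvP i0 hi0, qv i0, hqvQ i0 (by omega), rfl⟩, ?_⟩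
                set u2 : ℕ → ℕ := fun m => if m = i0 then pv i0 else u m with hu2def
                refine notWS_E hrt (u := u2) (v := v) ?_ ?_ ?_ ?_ ?_
                · intro i hi
                  simp only [hu2def]
                  by_cases h0 : i = i0
                  · rw [if_pos h0]; exact hE_sw_p i0 hi0 i0 hpnY
                  · rw [if_neg h0]
                    refine hE_sw i0 i0 _ (hu_mem i hi) ?_
                    rw [hueq i (by omega)]
                    intro h; exact h0 (hqv_inj i (by omega) i0 (by omega) h)
                · intro i hi; exact hD_sw i0 hi0 i0 _ (hv_mem i hi) (hvne i hi)
                · intro i hi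
                  simp only [hu2def]
                  by_cases h0 : i = i0
                  · rw [if_pos h0, h0]; exact hcmp
                  · rw [if_neg h0]; exact huv i hi
                · intro i hi
                  simp only [hu2def]
                  by_cases h0 : i + 1 = i0
                  · rw [if_pos h0]
                    have h1 := hvu i hi
                    have h2 := hueq (i + 1) (by omega)
                    have h3 := hqp1 i0 hi0
                    rw [h0] at h1 h2
                    omega
                  · rw [if_neg h0]; exact hvu i hi
                · rw [hSswap_card i0 hi0 i0 (by omega)]
                  exact hcardS
              · have hcmp' : v i0 < pv i0 := by
                  have := hvne i0 hi0
                  omega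
                refine ⟨insert (pv i0) (Q.erase (qv (i0 + 1))),
                  Or.inr ⟨pv i0, hpvP i0 hi0, qv (i0 + 1), hqvQ (i0 + 1) (by omega), rfl⟩, ?_⟩
                set u2 : ℕ → ℕ := fun m => if m = i0 + 1 then pv i0 else u m with hu2def
                refine notWS_E hrt (u := u2) (v := v) ?_ ?_ ?_ ?_ ?_
                · intro i hi
                  simp only [hu2def]
                  by_cases h0 : i = i0 + 1
                  · rw [if_pos h0]; exact hE_sw_p i0 hi0 (i0 + 1) hpnY
                  · rw [if_neg h0]
                    refine hE_sw i0 (i0 + 1) _ (hu_mem i hi) ?_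
                    rw [hueq i (by omega)]
                    intro h; exact h0 (hqv_inj i (by omega) (i0 + 1) (by omega) h)
                · intro i hi; exact hD_sw i0 hi0 (i0 + 1) _ (hv_mem i hi) (hvne i hi)
                · intro i hi
                  simp only [hu2def]
                  by_cases h0 : i = i0 + 1
                  · rw [if_pos h0, h0]
                    have h1 := hqp2 i0 hi0
                    have h2 := hueq (i0 + 1) (by omega)
                    have h3 := huv (i0 + 1) (by omega)
                    omega
                  · rw [if_neg h0]; exact huv i hi
                · intro i hi
                  simp only [hu2def]
                  by_cases h0 : i + 1 = i0 + 1
                  · rw [if_pos h0]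
                    have h1 : i = i0 := by omega
                    rw [h1]
                    exact hcmp'
                  · rw [if_neg h0]; exact hvu i hi
                · rw [hSswap_card i0 hi0 (i0 + 1) (by omega)]
                  exact hcardS

/-- (Theorem 3(ii)) if Y is not weakly r-separated from X ∪ Q then
Y is not weakly r-separated from X ∪ S for some S in the lower neighbor set
N↓(P,Q) = {Q∖{q} : q ∈ Q} ∪ {(Q∖{q})∪{p} : p ∈ P, q ∈ Q}. -/
theorem bad_pair_down_neighbor (r n : ℕ) (hr : Odd r)
    (p : Fin ((r + 1) / 2) → ℕ) (q : Fin ((r + 1) / 2 + 1) → ℕ)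
    (hp : ∀ i, p i ∈ Finset.Icc 1 n) (hq : ∀ i, q i ∈ Finset.Icc 1 n)
    (hchain : ∀ i : Fin ((r + 1) / 2), q i.castSucc < p i ∧ p i < q i.succ)
    (P Q : Finset ℕ)
    (hP : P = Finset.image p Finset.univ) (hQ : Q = Finset.image q Finset.univ)
    (X : Finset ℕ) (hX : X ⊆ Finset.Icc 1 n \ (P ∪ Q))
    (Y : Finset ℕ) (hYsub : Y ⊆ Finset.Icc 1 n)
    (hYP : Y ≠ X ∪ P) (hYQ : Y ≠ X ∪ Q)
    (hbad : ¬ WeaklySep r Y (X ∪ Q)) :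
    ∃ S : Finset ℕ,
      ((∃ b ∈ Q, S = Q.erase b) ∨ ∃ a ∈ P, ∃ b ∈ Q, S = insert a (Q.erase b)) ∧
      ¬ WeaklySep r Y (X ∪ S) := by
  classical
  obtain ⟨sr, hsr⟩ := hr
  have ht0 : (r + 1) / 2 = sr + 1 := by omega
  refine main_aux r ((r + 1) / 2) (by omega) (by omega)
    (fun i => if h : i < (r + 1) / 2 + 1 then q ⟨i, h⟩ else 0)
    (fun i => if h : i < (r + 1) / 2 then p ⟨i, h⟩ else 0)
    P Q X Y ?_ ?_ ?_ ?_ ?_ ?_ ?_ hYP hYQ hbad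
  · intro i hi
    simp only [dif_pos (show i < (r + 1) / 2 + 1 by omega), dif_pos hi]
    exact (hchain ⟨i, hi⟩).1
  · intro i hi
    simp only [dif_pos hi, dif_pos (show i + 1 < (r + 1) / 2 + 1 by omega)]
    exact (hchain ⟨i, hi⟩).2
  · intro j hj
    simp only [dif_pos hj]
    rw [hQ]
    exact mem_image_of_mem q (mem_univ _)
  · intro i hi
    simp only [dif_pos hi]
    rw [hP]
    exact mem_image_of_mem p (mem_univ _)
  · intro x hx
    rw [hQ] at hx
    simp only [Finset.mem_image, Finset.mem_univ, true_and] at hx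
    obtain ⟨a, rfl⟩ := hx
    refine ⟨a.val, a.isLt, ?_⟩
    simp only [dif_pos a.isLt]
  · intro x hx
    rw [hP] at hx
    simp only [Finset.mem_image, Finset.mem_univ, true_and] at hx
    obtain ⟨a, rfl⟩ := hx
    refine ⟨a.val, a.isLt, ?_⟩
    simp only [dif_pos a.isLt]
  · intro x hx
    have hx2 := hX hx
    simp only [mem_sdiff, mem_union] at hx2
    push_neg at hx2
    exact hx2.2
end

section
/- Let s be a positive odd integer and m a positive integer. Suppose X ⊆ [m] can be written as a union of at most (s+1)/2 intervals of [m], and let Y ⊆ [m] satisfy |Y| ≤ |X|. Then X and Y are weakly s-separated. -/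
open Finset

/-- `X` is a union of at most `k` intervals of `[m]`. -/
def UnionIntervals (m k : ℕ) (X : Finset ℕ) : Prop :=
  ∃ k' ≤ k, ∃ e : Fin k' → ℕ × ℕ,
    (∀ j, 1 ≤ (e j).1 ∧ (e j).1 ≤ (e j).2 ∧ (e j).2 ≤ m) ∧
    X = Finset.univ.sup fun j => Finset.Icc (e j).1 (e j).2

/-- If each `g i` lies in `X \ Y` and between any two of them there is a point
outside `X`, then there are at most `k'` of them (one per interval). -/
lemma inner_bound (X Y : Finset ℕ) (k' : ℕ) (e : Fin k' → ℕ × ℕ)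
    (hXe : X = Finset.univ.sup fun j => Finset.Icc (e j).1 (e j).2)
    (n : ℕ) (g : Fin n → ℕ)
    (hgX : ∀ i, g i ∈ X \ Y)
    (hsep : ∀ i i' : Fin n, i < i' → ∃ t, g i < t ∧ t < g i' ∧ t ∉ X) :
    n ≤ k' := by
  have hch : ∀ i : Fin n, ∃ j : Fin k', g i ∈ Finset.Icc (e j).1 (e j).2 := by
    intro i
    have h := hgX i
    rw [Finset.mem_sdiff, hXe, Finset.mem_sup] at h
    obtain ⟨⟨j, _, hj⟩, _⟩ := h
    exact ⟨j, hj⟩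
  choose φ hφ using hch
  have key : ∀ i i' : Fin n, i < i' → φ i ≠ φ i' := by
    intro i i' hlt heq
    obtain ⟨t, h1, h2, h3⟩ := hsep i i' hlt
    apply h3
    have hi := hφ i
    have hi' := hφ i'
    rw [heq] at hi
    rw [Finset.mem_Icc] at hi hi'
    have ht : t ∈ Finset.Icc (e (φ i')).1 (e (φ i')).2 :=
      Finset.mem_Icc.2 ⟨le_trans hi.1 h1.le, le_trans h2.le hi'.2⟩
    rw [hXe]
    exact Finset.le_sup (f := fun j => Finset.Icc (e j).1 (e j).2)
      (Finset.mem_univ (φ i')) ht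
  have hinj : Function.Injective φ := by
    intro i i' h
    by_contra hne
    rcases lt_or_gt_of_ne hne with hlt | hlt
    · exact key i i' hlt h
    · exact key i' i hlt h.symm
  simpa using Fintype.card_le_of_injective φ hinj

/-- Any alternating sequence for `X`, `Y` where `X` is a union of `k' ≤ k`
intervals has length at most `2k+1`. -/
lemma main_bound (X Y : Finset ℕ) (k k' : ℕ) (hk : k' ≤ k)
    (e : Fin k' → ℕ × ℕ)
    (hXe : X = Finset.univ.sup fun j => Finset.Icc (e j).1 (e j).2)
    (ℓ : ℕ) (f : Fin ℓ → ℕ) (hf : IsAltSeq X Y f) : ℓ ≤ 2 * k + 1 := by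
  by_contra hcon
  push_neg at hcon
  obtain ⟨hmono, hcase⟩ := hf
  rcases hcase with ⟨hev, hod⟩ | ⟨hev, hod⟩
  · -- even positions in X \ Y : take positions 0, 2, ..., 2k
    have hb : k + 1 ≤ k' := by
      apply inner_bound X Y k' e hXe (k+1) (fun i => f ⟨2 * (i : ℕ), by omega⟩)
      · intro i
        exact hev ⟨2 * (i : ℕ), by omega⟩ (by simp [Nat.mul_mod_right])
      · intro i i' hlt
        have hv : (i : ℕ) < (i' : ℕ) := hlt
        refine ⟨f ⟨2 * (i : ℕ) + 1, by omega⟩, ?_, ?_, ?_⟩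
        · exact hmono (by rw [Fin.mk_lt_mk]; omega)
        · exact hmono (by rw [Fin.mk_lt_mk]; omega)
        · have := hod ⟨2 * (i : ℕ) + 1, by omega⟩ (by simp only [Fin.val_mk]; omega)
          rw [Finset.mem_sdiff] at this
          exact this.2
    omega
  · -- odd positions in X \ Y : take positions 1, 3, ..., 2k+1
    have hb : k + 1 ≤ k' := by
      apply inner_bound X Y k' e hXe (k+1) (fun i => f ⟨2 * (i : ℕ) + 1, by omega⟩)
      · intro i
        exact hod ⟨2 * (i : ℕ) + 1, by omega⟩ (by simp only [Fin.val_mk]; omega)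
      · intro i i' hlt
        have hv : (i : ℕ) < (i' : ℕ) := hlt
        refine ⟨f ⟨2 * (i : ℕ) + 2, by omega⟩, ?_, ?_, ?_⟩
        · exact hmono (by rw [Fin.mk_lt_mk]; omega)
        · exact hmono (by rw [Fin.mk_lt_mk]; omega)
        · have := hev ⟨2 * (i : ℕ) + 2, by omega⟩ (by simp only [Fin.val_mk]; omega)
          rw [Finset.mem_sdiff] at this
          exact this.2
    omega

/-- if X ⊆ [m] is a union of at most (s+1)/2 intervals and
|Y| ≤ |X|, then X and Y are weakly s-separated. -/
theorem unionIntervals_weaklySep (s m : ℕ) (hs : Odd s) (hm : 0 < m)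
    (X Y : Finset ℕ) (hX : X ⊆ Finset.Icc 1 m)
    (hXI : UnionIntervals m ((s + 1) / 2) X)
    (hY : Y ⊆ Finset.Icc 1 m) (hcard : Y.card ≤ X.card) :
    WeaklySep s X Y := by
  obtain ⟨t, ht⟩ := hs
  set k : ℕ := (s + 1) / 2 with hkdef
  have hkt : k = t + 1 := by omega
  have hsk : s + 2 = 2 * k + 1 := by omega
  have hk1 : 1 ≤ k := by omega
  obtain ⟨k', hk', e, he, hXe⟩ := hXI
  set S : Set ℕ := {n : ℕ | ∃ f : Fin n → ℕ, IsAltSeq X Y f} with hSdef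
  have hS0 : (0 : ℕ) ∈ S := by
    refine ⟨Fin.elim0, fun i => i.elim0, Or.inl ⟨fun j => j.elim0, fun j => j.elim0⟩⟩
  have hbound : ∀ n ∈ S, n ≤ 2 * k + 1 := by
    rintro n ⟨f, hf⟩
    exact main_bound X Y k k' hk' e hXe n f hf
  have hAle : altLen X Y ≤ s + 2 := by
    rw [hsk]
    exact csSup_le ⟨0, hS0⟩ hbound
  refine ⟨hAle, ?_⟩
  intro heq
  right
  refine ⟨?_, hcard⟩
  -- extract a maximal alternating sequence, of length 2k+1
  have hmem : altLen X Y ∈ S := Nat.sSup_mem ⟨0, hS0⟩ ⟨2 * k + 1, hbound⟩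
  rw [heq, hsk] at hmem
  obtain ⟨f, hmono, hcase⟩ := hmem
  -- rule out the case where even positions are in X \ Y
  rcases hcase with ⟨hev, hod⟩ | ⟨hev, hod⟩
  · exfalso
    have hb : k + 1 ≤ k' := by
      apply inner_bound X Y k' e hXe (k+1) (fun i => f ⟨2 * (i : ℕ), by omega⟩)
      · intro i
        exact hev ⟨2 * (i : ℕ), by omega⟩ (by simp [Nat.mul_mod_right])
      · intro i i' hlt
        have hv : (i : ℕ) < (i' : ℕ) := hlt
        refine ⟨f ⟨2 * (i : ℕ) + 1, by omega⟩, ?_, ?_, ?_⟩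
        · exact hmono (by rw [Fin.mk_lt_mk]; omega)
        · exact hmono (by rw [Fin.mk_lt_mk]; omega)
        · have := hod ⟨2 * (i : ℕ) + 1, by omega⟩ (by simp only [Fin.val_mk]; omega)
          rw [Finset.mem_sdiff] at this
          exact this.2
    omega
  -- now even positions in Y \ X, odd positions in X \ Y
  have hne1 : (X \ Y).Nonempty := ⟨f ⟨1, by omega⟩, hod ⟨1, by omega⟩ (by norm_num)⟩
  have hne2 : (Y \ X).Nonempty := ⟨f ⟨0, by omega⟩, hev ⟨0, by omega⟩ (by norm_num)⟩
  have hdisj : ∀ a : ℕ, a ∈ X \ Y → a ∈ Y \ X → False := by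
    intro a h1 h2
    rw [Finset.mem_sdiff] at h1 h2
    exact h1.2 h2.1
  -- min part
  have hminlt : (Y \ X).min' hne2 < (X \ Y).min' hne1 := by
    by_contra hc
    push_neg at hc
    have hne : (X \ Y).min' hne1 ≠ (Y \ X).min' hne2 := by
      intro hEq
      exact hdisj _ (Finset.min'_mem _ hne1) (hEq ▸ Finset.min'_mem _ hne2)
    have hlt : (X \ Y).min' hne1 < (Y \ X).min' hne2 := lt_of_le_of_ne hc hne
    set a := (X \ Y).min' hne1 with hadef
    have haf0 : a < f ⟨0, by omega⟩ := lt_of_lt_of_le hlt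
      (Finset.min'_le _ _ (hev ⟨0, by omega⟩ (by norm_num)))
    -- extended sequence of length 2k+2
    set f' : Fin (2 * k + 2) → ℕ := fun j =>
      if h : (j : ℕ) = 0 then a else f ⟨(j : ℕ) - 1, by have := j.isLt; omega⟩ with hf'def
    have hf'alt : IsAltSeq X Y f' := by
      constructor
      · intro u v huv
        have hv : (u : ℕ) < (v : ℕ) := huv
        by_cases hu0 : (u : ℕ) = 0
        · have hv0 : (v : ℕ) ≠ 0 := by omega
          simp only [hf'def, hu0, dif_pos, hv0, dif_neg, not_false_iff]
          calc a < f ⟨0, by omega⟩ := haf0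
            _ ≤ f ⟨(v : ℕ) - 1, by have := v.isLt; omega⟩ :=
              hmono.monotone (by rw [Fin.mk_le_mk]; omega)
        · have hv0 : (v : ℕ) ≠ 0 := by omega
          simp only [hf'def, hu0, hv0, dif_neg, not_false_iff]
          exact hmono (by rw [Fin.mk_lt_mk]; omega)
      · left
        constructor
        · intro j hj
          by_cases hj0 : (j : ℕ) = 0
          · simp only [hf'def, hj0, dif_pos]
            exact Finset.min'_mem _ hne1
          · simp only [hf'def, hj0, dif_neg, not_false_iff]
            exact hod _ (by simp only [Fin.val_mk]; omega)
        · intro j hj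
          have hj0 : (j : ℕ) ≠ 0 := by omega
          simp only [hf'def, hj0, dif_neg, not_false_iff]
          exact hev _ (by simp only [Fin.val_mk]; omega)
    have := main_bound X Y k k' hk' e hXe (2 * k + 2) f' hf'alt
    omega
  -- max part
  have hmaxlt : (X \ Y).max' hne1 < (Y \ X).max' hne2 := by
    by_contra hc
    push_neg at hc
    have hne : (Y \ X).max' hne2 ≠ (X \ Y).max' hne1 := by
      intro hEq
      exact hdisj _ (hEq ▸ Finset.max'_mem _ hne1) (Finset.max'_mem _ hne2)
    have hlt : (Y \ X).max' hne2 < (X \ Y).max' hne1 := lt_of_le_of_ne hc hne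
    set c := (X \ Y).max' hne1 with hcdef
    have hcfl : f ⟨2 * k, by omega⟩ < c := lt_of_le_of_lt
      (Finset.le_max' _ _ (hev ⟨2 * k, by omega⟩ (Nat.mul_mod_right 2 k))) hlt
    set f' : Fin (2 * k + 2) → ℕ := fun j =>
      if h : (j : ℕ) < 2 * k + 1 then f ⟨(j : ℕ), h⟩ else c with hf'def
    have hf'alt : IsAltSeq X Y f' := by
      constructor
      · intro u v huv
        have hv : (u : ℕ) < (v : ℕ) := huv
        by_cases hvtop : (v : ℕ) < 2 * k + 1
        · have hutop : (u : ℕ) < 2 * k + 1 := by omega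
          rw [show f' u = f ⟨(u : ℕ), hutop⟩ from dif_pos hutop,
            show f' v = f ⟨(v : ℕ), hvtop⟩ from dif_pos hvtop]
          exact hmono (by rw [Fin.mk_lt_mk]; omega)
        · have hutop : (u : ℕ) < 2 * k + 1 := by have := v.isLt; omega
          rw [show f' u = f ⟨(u : ℕ), hutop⟩ from dif_pos hutop,
            show f' v = c from dif_neg hvtop]
          calc f ⟨(u : ℕ), hutop⟩ ≤ f ⟨2 * k, by omega⟩ :=
              hmono.monotone (by rw [Fin.mk_le_mk]; omega)
            _ < c := hcfl
      · right
        constructor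
        · intro j hj
          have hjlt : (j : ℕ) < 2 * k + 1 := by
            have := j.isLt; omega
          rw [show f' j = f ⟨(j : ℕ), hjlt⟩ from dif_pos hjlt]
          exact hev _ hj
        · intro j hj
          by_cases hjlt : (j : ℕ) < 2 * k + 1
          · rw [show f' j = f ⟨(j : ℕ), hjlt⟩ from dif_pos hjlt]
            exact hod _ hj
          · rw [show f' j = c from dif_neg hjlt]
            exact Finset.max'_mem _ hne1
    have := main_bound X Y k k' hk' e hXe (2 * k + 2) f' hf'alt
    omega
  constructor
  · rw [← Finset.coe_min' hne2, ← Finset.coe_min' hne1]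
    exact_mod_cast hminlt
  · rw [← Finset.coe_max' hne2, ← Finset.coe_max' hne1]
    exact_mod_cast hmaxlt
end

section
/- Fix integers n ≥ d ≥ 1. The directed graph Γ_{n,d} whose vertices are all cubes of Z(n,d) and whose edges are the pairs (C, C') of cubes such that C immediately precedes C' is acyclic, i.e., contains no directed cycle. -/
open Finset

/-- A cube of Z(n,d): a pair (X | T) with |T| = d, X disjoint from T, and
X ∪ T ⊆ [n].  `C.1` is the root and `C.2` the type. -/
def IsCube (n d : ℕ) (C : Finset ℕ × Finset ℕ) : Prop :=
  C.2.card = d ∧ Disjoint C.1 C.2 ∧ C.1 ∪ C.2 ⊆ Finset.Icc 1 n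

/-- The index of `t` in the increasing enumeration of `T`:
`idxIn T t = i` iff `t` is the `i`-th smallest element of `T` (when `t ∈ T`). -/
def idxIn (T : Finset ℕ) (t : ℕ) : ℕ := (T.filter fun x => x ≤ t).card

/-- `F` is a front facet of the cube `C` (with `|C.2| = d`):
`F = (X | T ∖ {pᵢ})` for `d - i` even, or `F = (X ∪ {pᵢ} | T ∖ {pᵢ})` for
`d - i` odd, where `p₁ < ⋯ < p_d` enumerate `T = C.2`. -/
def IsFrontFacet (d : ℕ) (C F : Finset ℕ × Finset ℕ) : Prop :=
  ∃ t ∈ C.2,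
    (Even (d - idxIn C.2 t) ∧ F = (C.1, C.2.erase t)) ∨
      (¬ Even (d - idxIn C.2 t) ∧ F = (insert t C.1, C.2.erase t))

/-- `F` is a rear facet of the cube `C`: the parities are opposite to those
of the front facets. -/
def IsRearFacet (d : ℕ) (C F : Finset ℕ × Finset ℕ) : Prop :=
  ∃ t ∈ C.2,
    (¬ Even (d - idxIn C.2 t) ∧ F = (C.1, C.2.erase t)) ∨
      (Even (d - idxIn C.2 t) ∧ F = (insert t C.1, C.2.erase t))

/-- The cube `C` immediately precedes the cube `C'` (both cubes of Z(n,d)):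
some rear facet of `C` equals some front facet of `C'`. -/
def ImmPrec (n d : ℕ) (C C' : Finset ℕ × Finset ℕ) : Prop :=
  IsCube n d C ∧ IsCube n d C' ∧ ∃ F, IsRearFacet d C F ∧ IsFrontFacet d C' F

def tauf (C : Finset ℕ × Finset ℕ) (i : ℕ) : ℤ :=
  if i ∈ C.1 then 1 else if i ∈ C.2 then 0 else -1

def rhof (C : Finset ℕ × Finset ℕ) (i : ℕ) : ℤ :=
  (-1) ^ (C.2.filter fun x => i < x).card

def ff (C : Finset ℕ × Finset ℕ) (i : ℕ) : ℤ := 5 ^ i * (tauf C i * rhof C i)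

def Phi (n : ℕ) (C : Finset ℕ × Finset ℕ) : ℤ := ∑ i ∈ Icc 1 n, ff C i

lemma card_filter_gt (d : ℕ) (T : Finset ℕ) (hc : T.card = d) (t : ℕ) :
    d - idxIn T t = (T.filter fun x => t < x).card := by
  have h := Finset.card_filter_add_card_filter_not (s := T) (p := fun x => x ≤ t)
  have h2 : (T.filter fun x => ¬ x ≤ t) = T.filter fun x => t < x := by
    apply Finset.filter_congr; intro x _; simp [not_le]
  rw [h2] at h
  unfold idxIn
  omega

lemma filter_gt_erase (T : Finset ℕ) (u i : ℕ) (h : ¬ i < u) :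
    ((T.erase u).filter fun x => i < x) = T.filter fun x => i < x := by
  rw [Finset.filter_erase]
  exact Finset.erase_eq_of_notMem (by simp [h])

lemma ff_bound (C : Finset ℕ × Finset ℕ) (i : ℕ) :
    -(5 ^ i : ℤ) ≤ ff C i ∧ ff C i ≤ 5 ^ i := by
  have h5 : (0:ℤ) < 5 ^ i := by positivity
  have hrho : rhof C i = 1 ∨ rhof C i = -1 := neg_one_pow_eq_or ℤ _
  have htau : tauf C i = 1 ∨ tauf C i = 0 ∨ tauf C i = -1 := by
    unfold tauf; split_ifs <;> simp
  unfold ff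
  rcases hrho with h1 | h1 <;> rcases htau with h2 | h2 | h2 <;>
    rw [h1, h2] <;> constructor <;> nlinarith

lemma geom_bound : ∀ m : ℕ, 2 * ∑ i ∈ Icc 1 m, (5:ℤ) ^ i < 5 ^ (m + 1) := by
  intro m
  induction m with
  | zero => simp
  | succ k ih =>
    rw [Finset.sum_Icc_succ_top (by omega : 1 ≤ k + 1)]
    have h5 : (0:ℤ) < 5 ^ (k + 1) := by positivity
    have hp : (5:ℤ) ^ (k + 1 + 1) = 5 * 5 ^ (k + 1) := by ring
    rw [hp]
    nlinarith

lemma main_ineq (n d : ℕ) (C C' : Finset ℕ × Finset ℕ)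
    (hC : IsCube n d C) (hC' : IsCube n d C')
    (u w : ℕ) (hu : u ∈ C.2) (hw : w ∈ C'.2) (hne : u ≠ w)
    (hTT : C.2.erase u = C'.2.erase w)
    (hXiff : ∀ i, i ≠ u → i ≠ w → (i ∈ C.1 ↔ i ∈ C'.1))
    (hwC1 : (w ∈ C.1) ↔ ¬ Even ((C'.2.filter fun x => w < x).card))
    (huC1' : (u ∈ C'.1) ↔ Even ((C.2.filter fun x => u < x).card)) :
    Phi n C < Phi n C' := by
  set b := max u w with hb
  -- ranges
  have hun : u ∈ Finset.Icc 1 n := hC.2.2 (Finset.mem_union_right _ hu)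
  have hwn : w ∈ Finset.Icc 1 n := hC'.2.2 (Finset.mem_union_right _ hw)
  rw [Finset.mem_Icc] at hun hwn
  have hb1 : 1 ≤ b := le_trans hun.1 (le_max_left u w)
  have hbn : b ≤ n := max_le hun.2 hwn.2
  -- membership facts
  have hwT : w ∉ C.2 := by
    intro h
    have : w ∈ C.2.erase u := Finset.mem_erase.2 ⟨(Ne.symm hne), h⟩
    rw [hTT] at this
    exact (Finset.mem_erase.1 this).1 rfl
  have huT' : u ∉ C'.2 := by
    intro h
    have : u ∈ C'.2.erase w := Finset.mem_erase.2 ⟨hne, h⟩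
    rw [← hTT] at this
    exact (Finset.mem_erase.1 this).1 rfl
  have huX : u ∉ C.1 := fun h => (Finset.disjoint_left.1 hC.2.1 h) hu
  have hwX' : w ∉ C'.1 := fun h => (Finset.disjoint_left.1 hC'.2.1 h) hw
  -- filter equality
  have hfe : ∀ i, ¬ i < u → ¬ i < w →
      (C.2.filter fun x => i < x) = (C'.2.filter fun x => i < x) := by
    intro i h1 h2
    rw [← filter_gt_erase C.2 u i h1, hTT, filter_gt_erase C'.2 w i h2]
  -- key value at b
  have hgb : ff C' b - ff C b = 5 ^ b := by
    rcases lt_or_gt_of_ne hne with hlt | hlt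
    · -- u < w, b = w
      have hbw : b = w := max_eq_right hlt.le
      rw [hbw]
      have h1 : ff C' w = 0 := by
        unfold ff tauf
        rw [if_neg hwX', if_pos hw]; ring
      have hre : rhof C w = rhof C' w := by
        unfold rhof
        rw [hfe w (by omega) (by omega)]
      have h2 : ff C w = -(5 ^ w) := by
        by_cases he : Even ((C'.2.filter fun x => w < x).card)
        · have hwx : w ∉ C.1 := fun h => (hwC1.1 h) he
          unfold ff tauf
          rw [if_neg hwx, if_neg hwT, hre]
          unfold rhof; rw [he.neg_one_pow]; ring
        · have hwx : w ∈ C.1 := hwC1.2 he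
          unfold ff tauf
          rw [if_pos hwx, hre]
          unfold rhof; rw [(Nat.not_even_iff_odd.1 he).neg_one_pow]; ring
      rw [h1, h2]; ring
    · -- w < u, b = u
      have hbu : b = u := max_eq_left hlt.le
      rw [hbu]
      have h1 : ff C u = 0 := by
        unfold ff tauf
        rw [if_neg huX, if_pos hu]; ring
      have hre : rhof C' u = rhof C u := by
        unfold rhof
        rw [hfe u (by omega) (by omega)]
      have h2 : ff C' u = 5 ^ u := by
        unfold ff tauf
        by_cases he : Even ((C.2.filter fun x => u < x).card)
        · rw [if_pos (huC1'.2 he), hre]; unfold rhof; rw [he.neg_one_pow]; ring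
        · rw [if_neg (fun h => he (huC1'.1 h)), if_neg huT', hre]
          unfold rhof
          rw [(Nat.not_even_iff_odd.1 he).neg_one_pow]; ring
      rw [h1, h2]; ring
  -- equality above b
  have hgt : ∀ i, b < i → ff C' i = ff C i := by
    intro i hi
    have hiu : i ≠ u := by omega
    have hiw : i ≠ w := by omega
    have ht : tauf C' i = tauf C i := by
      unfold tauf
      have h1 : (i ∈ C'.1) ↔ (i ∈ C.1) := (hXiff i hiu hiw).symm
      have h2 : (i ∈ C'.2) ↔ (i ∈ C.2) := by
        constructor
        · intro h
          have : i ∈ C'.2.erase w := Finset.mem_erase.2 ⟨hiw, h⟩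
          rw [← hTT] at this
          exact (Finset.mem_erase.1 this).2
        · intro h
          have : i ∈ C.2.erase u := Finset.mem_erase.2 ⟨hiu, h⟩
          rw [hTT] at this
          exact (Finset.mem_erase.1 this).2
      by_cases ha : i ∈ C.1
      · rw [if_pos ha, if_pos (h1.2 ha)]
      · rw [if_neg ha, if_neg (fun h => ha (h1.1 h))]
        by_cases hb2 : i ∈ C.2
        · rw [if_pos hb2, if_pos (h2.2 hb2)]
        · rw [if_neg hb2, if_neg (fun h => hb2 (h2.1 h))]
    have hr : rhof C' i = rhof C i := by
      unfold rhof
      rw [hfe i (by omega) (by omega)]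
    unfold ff; rw [ht, hr]
  -- the sum
  have hsub : Phi n C' - Phi n C = ∑ i ∈ Icc 1 n, (ff C' i - ff C i) := by
    unfold Phi; rw [Finset.sum_sub_distrib]
  have hshrink : ∑ i ∈ Icc 1 n, (ff C' i - ff C i)
      = ∑ i ∈ Icc 1 b, (ff C' i - ff C i) := by
    symm
    apply Finset.sum_subset
    · intro x hx
      rw [Finset.mem_Icc] at hx ⊢
      omega
    · intro x hx hnx
      rw [Finset.mem_Icc] at hx
      rw [Finset.mem_Icc] at hnx
      have : b < x := by omega
      rw [hgt x this]; ring
  have hsplit : ∑ i ∈ Icc 1 b, (ff C' i - ff C i)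
      = (∑ i ∈ Icc 1 (b - 1), (ff C' i - ff C i)) + (ff C' b - ff C b) := by
    have hbb : b - 1 + 1 = b := by omega
    rw [← hbb, Finset.sum_Icc_succ_top (by omega : 1 ≤ b - 1 + 1)]
    simp
  have hlow : ∀ i ∈ Icc 1 (b - 1), -(2 * (5:ℤ) ^ i) ≤ ff C' i - ff C i := by
    intro i _
    have h1 := ff_bound C i
    have h2 := ff_bound C' i
    linarith [h1.1, h1.2, h2.1, h2.2]
  have hsumlow : ∑ i ∈ Icc 1 (b - 1), (-(2 * (5:ℤ) ^ i))
      ≤ ∑ i ∈ Icc 1 (b - 1), (ff C' i - ff C i) := Finset.sum_le_sum hlow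
  have hgeo := geom_bound (b - 1)
  have hbb : b - 1 + 1 = b := by omega
  rw [hbb] at hgeo
  have hneg : ∑ i ∈ Icc 1 (b - 1), (-(2 * (5:ℤ) ^ i))
      = -(2 * ∑ i ∈ Icc 1 (b - 1), (5:ℤ) ^ i) := by
    rw [Finset.mul_sum, ← Finset.sum_neg_distrib]
  have : 0 < Phi n C' - Phi n C := by
    rw [hsub, hshrink, hsplit, hgb]
    rw [hneg] at hsumlow
    linarith
  linarith


lemma immPrec_phi_lt (n d : ℕ) (C C' : Finset ℕ × Finset ℕ)
    (h : ImmPrec n d C C') : Phi n C < Phi n C' := by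
  obtain ⟨hC, hC', F, ⟨u, hu, hr⟩, ⟨w, hw, hf⟩⟩ := h
  rw [card_filter_gt d C.2 hC.1 u] at hr
  rw [card_filter_gt d C'.2 hC'.1 w] at hf
  have huX : u ∉ C.1 := fun hm => (Finset.disjoint_left.1 hC.2.1 hm) hu
  have hwX' : w ∉ C'.1 := fun hm => (Finset.disjoint_left.1 hC'.2.1 hm) hw
  -- helper for parity contradiction when u = w
  have hpar : ∀ (_ : u = w) (hTT : C.2.erase u = C'.2.erase w),
      (C.2.filter fun x => u < x).card = (C'.2.filter fun x => w < x).card := by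
    intro hew hTT
    subst hew
    rw [← filter_gt_erase C.2 u u (lt_irrefl u), hTT,
      filter_gt_erase C'.2 u u (lt_irrefl u)]
  rcases hr with ⟨hpu, hFeq⟩ | ⟨hpu, hFeq⟩ <;>
    rcases hf with ⟨hpw, hFeq'⟩ | ⟨hpw, hFeq'⟩ <;>
      rw [hFeq, Prod.mk.injEq] at hFeq' <;>
        obtain ⟨hX, hTT⟩ := hFeq'
  -- Case RA-FA : C.1 = C'.1
  · have hne : u ≠ w := fun hew => hpu (hpar hew hTT ▸ hpw)
    exact main_ineq n d C C' hC hC' u w hu hw hne hTT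
      (fun i _ _ => by rw [hX])
      (by simp [hX ▸ hwX', hpw])
      (by simp [hX.symm ▸ huX, hpu])
  -- Case RA-FB : C.1 = insert w C'.1
  · have hwX : w ∈ C.1 := hX ▸ Finset.mem_insert_self w C'.1
    have hne : u ≠ w := fun hew => huX (hew ▸ hwX)
    have huX' : u ∉ C'.1 := fun hm => huX (hX ▸ Finset.mem_insert_of_mem hm)
    exact main_ineq n d C C' hC hC' u w hu hw hne hTT
      (fun i _ hiw => by rw [hX]; simp [Finset.mem_insert, hiw])
      (by simp [hwX, hpw])
      (by simp [huX', hpu])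
  -- Case RB-FA : insert u C.1 = C'.1
  · have huX' : u ∈ C'.1 := hX ▸ Finset.mem_insert_self u C.1
    have hne : u ≠ w := fun hew => hwX' (hew ▸ huX')
    have hwX : w ∉ C.1 := fun hm => hwX' (hX ▸ Finset.mem_insert_of_mem hm)
    exact main_ineq n d C C' hC hC' u w hu hw hne hTT
      (fun i hiu _ => by rw [← hX]; simp [Finset.mem_insert, hiu])
      (by simp [hwX, hpw])
      (by simp [huX', hpu])
  -- Case RB-FB : insert u C.1 = insert w C'.1
  · have hne : u ≠ w := fun hew => hpw (hpar hew hTT ▸ hpu)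
    have huX' : u ∈ C'.1 := by
      have : u ∈ insert w C'.1 := hX ▸ Finset.mem_insert_self u C.1
      exact (Finset.mem_insert.1 this).resolve_left hne
    have hwX : w ∈ C.1 := by
      have : w ∈ insert u C.1 := hX ▸ Finset.mem_insert_self w C'.1
      exact (Finset.mem_insert.1 this).resolve_left (Ne.symm hne)
    exact main_ineq n d C C' hC hC' u w hu hw hne hTT
      (fun i hiu hiw => by
        constructor
        · intro hm
          have : i ∈ insert w C'.1 := hX ▸ Finset.mem_insert_of_mem hm
          exact (Finset.mem_insert.1 this).resolve_left hiw
        · intro hm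
          have : i ∈ insert u C.1 := hX ▸ Finset.mem_insert_of_mem hm
          exact (Finset.mem_insert.1 this).resolve_left hiu)
      (by simp [hwX, hpw])
      (by simp [huX', hpu])


/-- (Proposition 1) the directed graph Γ_{n,d} on cubes of
Z(n,d), with edges given by the "immediately precedes" relation, is acyclic:
no cube is related to itself by the transitive closure of the relation. -/
theorem immPrec_acyclic (n d : ℕ) (hd : 1 ≤ d) (hdn : d ≤ n) :
    ∀ C : Finset ℕ × Finset ℕ, ¬ Relation.TransGen (ImmPrec n d) C C := by
  have key : ∀ C C' : Finset ℕ × Finset ℕ,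
      Relation.TransGen (ImmPrec n d) C C' → Phi n C < Phi n C' := by
    intro C C' h
    induction h with
    | single h => exact immPrec_phi_lt n d _ _ h
    | tail _ h2 ih => exact lt_trans ih (immPrec_phi_lt n d _ _ h2)
  intro C h
  exact lt_irrefl _ (key C C h)
end

section
/- Fix integers n ≥ d ≥ 1. For a cube C = (X | T) of Z(n,d), define ω(C) := 0 if n ∉ X∪T, ω(C) := 1 if n ∈ T, and ω(C) := 2 if n ∈ X. If a cube C immediately precedes a cube C', then ω(C) ≤ ω(C'). -/
open Finset

/-- The label ω of a cube: 0 if n ∉ X ∪ T, 1 if n ∈ T, 2 if n ∈ X. -/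
def omegaLabel (n : ℕ) (C : Finset ℕ × Finset ℕ) : ℕ :=
  if n ∈ C.2 then 1 else if n ∈ C.1 then 2 else 0


lemma idx_top {n : ℕ} {T : Finset ℕ} (hT : T ⊆ Finset.Icc 1 n) : idxIn T n = T.card := by
  unfold idxIn
  congr 1
  apply Finset.filter_true_of_mem
  intro x hx
  exact (Finset.mem_Icc.mp (hT hx)).2

/-- (the Claim) if C immediately precedes C' then ω(C) ≤ ω(C'). -/
theorem omegaLabel_monotone (n d : ℕ) (hd : 1 ≤ d) (hdn : d ≤ n)
    (C C' : Finset ℕ × Finset ℕ) (h : ImmPrec n d C C') :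
    omegaLabel n C ≤ omegaLabel n C' := by

  obtain ⟨hC, hC', F, ⟨t, ht, hR⟩, ⟨t', ht', hF⟩⟩ := h
  have hA : n ∈ F.1 → omegaLabel n C' = 2 := by
    intro hn
    rcases hF with ⟨_, hFe⟩ | ⟨hod, hFe⟩
    · subst hFe
      have hnT' : n ∉ C'.2 := Finset.disjoint_left.mp hC'.2.1 hn
      simp only [omegaLabel, if_neg hnT', if_pos hn]
    · subst hFe
      have hne : t' ≠ n := by
        rintro rfl
        apply hod
        rw [idx_top (fun x hx => hC'.2.2 (Finset.mem_union_right _ hx)), hC'.1,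
          Nat.sub_self]
        exact Even.zero
      have hn' : n ∈ C'.1 := by
        rcases Finset.mem_insert.mp hn with h | h
        · exact absurd h.symm hne
        · exact h
      have hnT' : n ∉ C'.2 := Finset.disjoint_left.mp hC'.2.1 hn'
      simp only [omegaLabel, if_neg hnT', if_pos hn']
  have hF2 : F.2 = C'.2.erase t' := by
    rcases hF with ⟨_, hFe⟩ | ⟨_, hFe⟩ <;> rw [hFe]
  have hB : n ∈ F.2 → 1 ≤ omegaLabel n C' := by
    intro hn
    rw [hF2] at hn
    have : n ∈ C'.2 := Finset.mem_of_mem_erase hn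
    simp only [omegaLabel, if_pos this]
    exact le_refl 1
  by_cases hnT : n ∈ C.2
  · have hωC : omegaLabel n C = 1 := by simp only [omegaLabel, if_pos hnT]
    by_cases htn : t = n
    · have hev : Even (d - idxIn C.2 t) := by
        rw [htn, idx_top (fun x hx => hC.2.2 (Finset.mem_union_right _ hx)), hC.1,
          Nat.sub_self]
        exact Even.zero
      rcases hR with ⟨hod, _⟩ | ⟨_, hFe⟩
      · exact absurd hev hod
      · have hn1 : n ∈ F.1 := by rw [hFe, ← htn]; exact Finset.mem_insert_self _ _
        rw [hωC, hA hn1]; omega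
    · have hn2 : n ∈ F.2 := by
        rcases hR with ⟨_, hFe⟩ | ⟨_, hFe⟩ <;> rw [hFe] <;>
          exact Finset.mem_erase.mpr ⟨fun h => htn h.symm, hnT⟩
      rw [hωC]; exact hB hn2
  · by_cases hnX : n ∈ C.1
    · have hn1 : n ∈ F.1 := by
        rcases hR with ⟨_, hFe⟩ | ⟨_, hFe⟩ <;> rw [hFe]
        · exact hnX
        · exact Finset.mem_insert_of_mem hnX
      have hωC : omegaLabel n C = 2 := by simp only [omegaLabel, if_neg hnT, if_pos hnX]
      rw [hωC, hA hn1]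
    · have hωC : omegaLabel n C = 0 := by simp only [omegaLabel, if_neg hnT, if_neg hnX]
      rw [hωC]; exact Nat.zero_le _
end
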